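/- arXiv:1105.5303 — 15 statements merged into one kernel-verified Lean document; each statement's English description precedes it below -/
import Mathlib

section
/- Let n, q, k be real constants with q ≠ 0, and let p = 0. Let g, h : (0,∞) → ℝ be continuously differentiable and define G(x,v) := x^{−2−2/q} g(v x^{2/q}) and H(x,v) := x^{−1−2/q} h(v x^{2/q}) for x > 0, v > 0. Then (G,H) satisfies the time-translation-group resolving system G_x + H G_v − G H_v = 0, G − (n−1)H/x − H_x − H H_v = −k v^{q+1} on x > 0, v > 0 if and only if for all V > 0: (h(V) + 2V/q) g′(V) − g(V) h′(V) − (2 + 2/q) g(V) = 0 and g(V) + (2 − n + 2/q) h(V) − (h(V) + 2V/q) h′(V) = −k V^{q+1}. -/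
open Real Set

set_option maxHeartbeats 1600000 in
/-- Scaling-invariant reduction (`p = 0`): `(G,H)` of scaling-invariant form solves the
time-translation-group resolving system iff `(g,h)` solves the reduced ODE system. -/
theorem scaling_invariant_reduction
    (n q k : ℝ) (hq : q ≠ 0)
    (g h : ℝ → ℝ)
    (hg : ContDiffOn ℝ 1 g (Set.Ioi 0)) (hh : ContDiffOn ℝ 1 h (Set.Ioi 0))
    (G H : ℝ → ℝ → ℝ)
    (hGdef : ∀ x v : ℝ, G x v = x ^ (-2 - 2 / q) * g (v * x ^ (2 / q)))
    (hHdef : ∀ x v : ℝ, H x v = x ^ (-1 - 2 / q) * h (v * x ^ (2 / q))) :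
    (∀ x v : ℝ, 0 < x → 0 < v →
      (deriv (fun s => G s v) x + H x v * deriv (fun w => G x w) v
          - G x v * deriv (fun w => H x w) v = 0 ∧
        G x v - (n - 1) * H x v / x - deriv (fun s => H s v) x
          - H x v * deriv (fun w => H x w) v = -k * v ^ (q + 1))) ↔
    (∀ V : ℝ, 0 < V →
      ((h V + 2 * V / q) * deriv g V - g V * deriv h V - (2 + 2 / q) * g V = 0 ∧
        g V + (2 - n + 2 / q) * h V - (h V + 2 * V / q) * deriv h V
          = -k * V ^ (q + 1))) := by
  have hgd : ∀ V : ℝ, 0 < V → HasDerivAt g (deriv g V) V := fun V hV =>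
    ((hg.differentiableOn one_ne_zero).differentiableAt (Ioi_mem_nhds hV)).hasDerivAt
  have hhd : ∀ V : ℝ, 0 < V → HasDerivAt h (deriv h V) V := fun V hV =>
    ((hh.differentiableOn one_ne_zero).differentiableAt (Ioi_mem_nhds hV)).hasDerivAt
  have key : ∀ x v : ℝ, 0 < x → 0 < v →
      (deriv (fun s => G s v) x + H x v * deriv (fun w => G x w) v
          - G x v * deriv (fun w => H x w) v
        = x ^ (-3 - 2 / q) *
          ((h (v * x ^ (2 / q)) + 2 * (v * x ^ (2 / q)) / q) * deriv g (v * x ^ (2 / q))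
            - g (v * x ^ (2 / q)) * deriv h (v * x ^ (2 / q))
            - (2 + 2 / q) * g (v * x ^ (2 / q)))) ∧
      (G x v - (n - 1) * H x v / x - deriv (fun s => H s v) x
          - H x v * deriv (fun w => H x w) v + k * v ^ (q + 1)
        = x ^ (-2 - 2 / q) *
          (g (v * x ^ (2 / q)) + (2 - n + 2 / q) * h (v * x ^ (2 / q))
            - (h (v * x ^ (2 / q)) + 2 * (v * x ^ (2 / q)) / q) * deriv h (v * x ^ (2 / q))
            + k * (v * x ^ (2 / q)) ^ (q + 1))) := by
    intro x v hx hv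
    have hxP : (0:ℝ) < x ^ (2 / q) := Real.rpow_pos_of_pos hx _
    have hV : 0 < v * x ^ (2 / q) := mul_pos hv hxP
    have hy : (0:ℝ) < x ^ (1 / q) := Real.rpow_pos_of_pos hx _
    have splitn : ∀ (m l : ℕ) (e : ℝ), e = m + l * (1 / q) →
        x ^ e = x ^ m * (x ^ (1 / q)) ^ l := by
      intro m l e he
      rw [he, Real.rpow_add hx, Real.rpow_natCast,
        show ((l:ℝ) * (1 / q)) = (1 / q) * (l:ℝ) from mul_comm _ _,
        Real.rpow_mul hx.le, Real.rpow_natCast]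
    have splitneg : ∀ (m l : ℕ) (e : ℝ), e = -((m:ℝ) + l * (1 / q)) →
        x ^ e = (x ^ m * (x ^ (1 / q)) ^ l)⁻¹ := by
      intro m l e he
      rw [he, Real.rpow_neg hx.le, splitn m l _ rfl]
    have h2q : x ^ (2 / q) = (x ^ (1 / q)) ^ 2 := by
      simpa using splitn 0 2 (2 / q) (by push_cast; ring)
    have smix : x ^ (2 / q - 1) = (x ^ (1 / q)) ^ 2 * x⁻¹ := by
      rw [show (2 / q - 1 : ℝ) = 2 / q + (-1) by ring, Real.rpow_add hx,
        Real.rpow_neg_one, h2q]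
    have dG1 : deriv (fun s => G s v) x
        = (-2 - 2 / q) * x ^ (-2 - 2 / q - 1) * g (v * x ^ (2 / q))
          + x ^ (-2 - 2 / q) * (deriv g (v * x ^ (2 / q)) * (v * (2 / q * x ^ (2 / q - 1)))) := by
      have e : (fun s => G s v) = fun s => s ^ (-2 - 2 / q) * g (v * s ^ (2 / q)) :=
        funext fun s => hGdef s v
      rw [e]
      have h1 : HasDerivAt (fun s : ℝ => s ^ (-2 - 2 / q)) ((-2 - 2 / q) * x ^ (-2 - 2 / q - 1)) x :=
        Real.hasDerivAt_rpow_const (Or.inl hx.ne')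
      have h2 : HasDerivAt (fun s : ℝ => v * s ^ (2 / q)) (v * (2 / q * x ^ (2 / q - 1))) x :=
        (Real.hasDerivAt_rpow_const (Or.inl hx.ne')).const_mul v
      exact (h1.mul ((hgd _ hV).comp x h2)).deriv
    have dH1 : deriv (fun s => H s v) x
        = (-1 - 2 / q) * x ^ (-1 - 2 / q - 1) * h (v * x ^ (2 / q))
          + x ^ (-1 - 2 / q) * (deriv h (v * x ^ (2 / q)) * (v * (2 / q * x ^ (2 / q - 1)))) := by
      have e : (fun s => H s v) = fun s => s ^ (-1 - 2 / q) * h (v * s ^ (2 / q)) :=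
        funext fun s => hHdef s v
      rw [e]
      have h1 : HasDerivAt (fun s : ℝ => s ^ (-1 - 2 / q)) ((-1 - 2 / q) * x ^ (-1 - 2 / q - 1)) x :=
        Real.hasDerivAt_rpow_const (Or.inl hx.ne')
      have h2 : HasDerivAt (fun s : ℝ => v * s ^ (2 / q)) (v * (2 / q * x ^ (2 / q - 1))) x :=
        (Real.hasDerivAt_rpow_const (Or.inl hx.ne')).const_mul v
      exact (h1.mul ((hhd _ hV).comp x h2)).deriv
    have dG2 : deriv (fun w => G x w) v
        = x ^ (-2 - 2 / q) * (deriv g (v * x ^ (2 / q)) * x ^ (2 / q)) := by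
      have e : (fun w => G x w) = fun w => x ^ (-2 - 2 / q) * g (w * x ^ (2 / q)) :=
        funext fun w => hGdef x w
      rw [e]
      have h2 : HasDerivAt (fun w : ℝ => w * x ^ (2 / q)) (x ^ (2 / q)) v :=
        hasDerivAt_mul_const _
      exact (((hgd _ hV).comp v h2).const_mul _).deriv
    have dH2 : deriv (fun w => H x w) v
        = x ^ (-1 - 2 / q) * (deriv h (v * x ^ (2 / q)) * x ^ (2 / q)) := by
      have e : (fun w => H x w) = fun w => x ^ (-1 - 2 / q) * h (w * x ^ (2 / q)) :=
        funext fun w => hHdef x w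
      rw [e]
      have h2 : HasDerivAt (fun w : ℝ => w * x ^ (2 / q)) (x ^ (2 / q)) v :=
        hasDerivAt_mul_const _
      exact (((hhd _ hV).comp v h2).const_mul _).deriv
    have hVpow : (v * x ^ (2 / q)) ^ (q + 1)
        = v ^ (q + 1) * (x ^ 2 * (x ^ (1 / q)) ^ 2) := by
      rw [Real.mul_rpow hv.le hxP.le, ← Real.rpow_mul hx.le,
        show (2 / q * (q + 1)) = 2 + 2 / q by field_simp,
        splitn 2 2 (2 + 2 / q) (by push_cast; ring)]
    constructor
    · rw [dG1, dG2, dH2, hGdef, hHdef,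
        splitneg 3 2 (-3 - 2 / q) (by push_cast; ring),
        splitneg 3 2 (-2 - 2 / q - 1) (by push_cast; ring),
        smix,
        splitneg 2 2 (-2 - 2 / q) (by push_cast; ring),
        splitneg 1 2 (-1 - 2 / q) (by push_cast; ring),
        h2q]
      field_simp
      ring
    · rw [dH1, dH2, hGdef, hHdef, hVpow,
        splitneg 2 2 (-1 - 2 / q - 1) (by push_cast; ring),
        smix,
        splitneg 2 2 (-2 - 2 / q) (by push_cast; ring),
        splitneg 1 2 (-1 - 2 / q) (by push_cast; ring),
        h2q]
      field_simp
      ring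
  constructor
  · intro hPDE V hV
    obtain ⟨e1, e2⟩ := hPDE 1 V one_pos hV
    obtain ⟨k1, k2⟩ := key 1 V one_pos hV
    have t1 := k1.symm.trans e1
    rw [e2] at k2
    simp only [Real.one_rpow, one_mul, mul_one] at t1 k2
    exact ⟨by linarith, by linarith⟩
  · intro hODE x v hx hv
    have hV : 0 < v * x ^ (2 / q) := mul_pos hv (Real.rpow_pos_of_pos hx _)
    obtain ⟨o1, o2⟩ := hODE _ hV
    obtain ⟨k1, k2⟩ := key x v hx hv
    constructor
    · rw [k1, o1, mul_zero]
    · have hz : g (v * x ^ (2 / q)) + (2 - n + 2 / q) * h (v * x ^ (2 / q))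
          - (h (v * x ^ (2 / q)) + 2 * (v * x ^ (2 / q)) / q) * deriv h (v * x ^ (2 / q))
          + k * (v * x ^ (2 / q)) ^ (q + 1) = 0 := by linarith
      rw [hz, mul_zero] at k2
      linarith
end

section
/- Let n, k be real constants with n ≠ 2, n ≠ 3, and k(n−2)/(n−3) > 0, let p = 0 and q = 2/(2−n), and let ε ∈ {1, −1}. Define for x > 0, v > 0: G(x,v) := ε (4−n) (k(n−2)/(n−3))^{1/2} v^{(n−3)/(n−2)} / x and H(x,v) := ε (k(n−2)/(n−3))^{1/2} v^{(n−3)/(n−2)} + (2−n) v / x. Then (G,H) satisfies the time-translation-group resolving system G_x + H G_v − G H_v = 0 and G − (n−1)H/x − H_x − H H_v = −k v^{q+1} for all x > 0, v > 0. -/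
/-- Explicit scaling-invariant solution of the time-translation-group resolving system
for `p = 0`, `q = 2/(2-n)`, `n ≠ 2,3`. -/
theorem resolving_solution_scaling
    (n k p q ε : ℝ)
    (hn2 : n ≠ 2) (hn3 : n ≠ 3) (hk : 0 < k * (n - 2) / (n - 3))
    (hp : p = 0) (hq : q = 2 / (2 - n))
    (hε : ε = 1 ∨ ε = -1)
    (G H : ℝ → ℝ → ℝ)
    (hGdef : ∀ x v : ℝ, G x v =
      ε * (4 - n) * Real.sqrt (k * (n - 2) / (n - 3)) * v ^ ((n - 3) / (n - 2)) / x)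
    (hHdef : ∀ x v : ℝ, H x v =
      ε * Real.sqrt (k * (n - 2) / (n - 3)) * v ^ ((n - 3) / (n - 2)) + (2 - n) * v / x) :
    ∀ x v : ℝ, 0 < x → 0 < v →
      deriv (fun s => G s v) x + H x v * deriv (fun w => G x w) v
        - G x v * deriv (fun w => H x w) v = 0 ∧
      G x v - (n - 1) * H x v / x - deriv (fun s => H s v) x
        - H x v * deriv (fun w => H x w) v = -k * v ^ (q + 1) := by
  have hn2' : n - 2 ≠ 0 := sub_ne_zero.mpr hn2
  have hn3' : n - 3 ≠ 0 := sub_ne_zero.mpr hn3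
  set a : ℝ := Real.sqrt (k * (n - 2) / (n - 3)) with ha
  have ha2 : a * a = k * (n - 2) / (n - 3) := Real.mul_self_sqrt hk.le
  set α : ℝ := (n - 3) / (n - 2) with hα
  intro x v hx hv
  have hx0 : x ≠ 0 := hx.ne'
  have hv0 : v ≠ 0 := hv.ne'
  -- derivative of G in x
  have dGx : deriv (fun s => G s v) x = -(ε * (4 - n) * a * v ^ α) / x ^ 2 := by
    have hfun : (fun s => G s v) = fun s => ε * (4 - n) * a * v ^ α * s⁻¹ := by
      funext s; rw [hGdef]; ring
    rw [hfun]
    have := ((hasDerivAt_inv hx0).const_mul (ε * (4 - n) * a * v ^ α)).deriv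
    rw [this]; ring
  -- derivative of G in v
  have dGv : deriv (fun w => G x w) v = ε * (4 - n) * a * (α * v ^ (α - 1)) / x := by
    have hfun : (fun w => G x w) = fun w => w ^ α * (ε * (4 - n) * a / x) := by
      funext w; rw [hGdef]; ring
    rw [hfun]
    have := ((Real.hasDerivAt_rpow_const (p := α) (Or.inl hv0)).mul_const
      (ε * (4 - n) * a / x)).deriv
    rw [this]; ring
  -- derivative of H in x
  have dHx : deriv (fun s => H s v) x = -((2 - n) * v) / x ^ 2 := by
    have hfun : (fun s => H s v) = fun s => ε * a * v ^ α + (2 - n) * v * s⁻¹ := by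
      funext s; rw [hHdef]; ring
    rw [hfun]
    have := (((hasDerivAt_inv hx0).const_mul ((2 - n) * v)).const_add
      (ε * a * v ^ α)).deriv
    rw [this]; ring
  -- derivative of H in v
  have dHv : deriv (fun w => H x w) v = ε * a * (α * v ^ (α - 1)) + (2 - n) / x := by
    have hfun : (fun w => H x w) = fun w => w ^ α * (ε * a) + w * ((2 - n) / x) := by
      funext w; rw [hHdef]; ring
    rw [hfun]
    have := (((Real.hasDerivAt_rpow_const (p := α) (Or.inl hv0)).mul_const (ε * a)).add
      ((hasDerivAt_id' v).mul_const ((2 - n) / x))).deriv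
    exact this.trans (by ring)
  -- power identities
  have hpow1 : v ^ (α - 1) = v ^ α * v⁻¹ := by
    rw [Real.rpow_sub hv, Real.rpow_one, div_eq_mul_inv]
  have h2n : (2 : ℝ) - n ≠ 0 := fun h => hn2 (by linarith)
  have hq1 : q + 1 = α + α - 1 := by
    rw [hq, hα]; field_simp [h2n]; ring
  have hpow2 : v ^ (q + 1) = v ^ α * v ^ α * v⁻¹ := by
    rw [hq1, Real.rpow_sub hv, Real.rpow_add hv, Real.rpow_one, div_eq_mul_inv]
  have hkval : k = a * a * α := by
    rw [ha2, hα]; field_simp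
  rw [hGdef, hHdef]
  rcases hε with h | h <;> subst h <;>
  exact ⟨by rw [dGx, dGv, dHv, hpow1, hα]; field_simp [h2n]; ring,
    by rw [dHx, dHv, hpow1, hpow2, hkval, hα]; field_simp [h2n]; ring⟩
end

section
/- Let p, q, k be real constants with p > 0, k > 0, q + 2 > 0, q ≠ 0, q ≠ −1, let n = 1, and let ε ∈ {1, −1}. Define for x > 0, v > 0: G(x,v) := ((q+4)/(q+2)) (p v + (p k)^{1/2} v^{1+q/2}) and H(x,v) := ε ((2p/(q+2))^{1/2} v + (2k/(q+2))^{1/2} v^{1+q/2}). Then (G,H) satisfies the time-translation-group resolving system G_x + H G_v − G H_v = 0 and G − H_x − H H_v = (p − k v^q) v for all x > 0, v > 0. -/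
/-- Explicit translation-invariant solution of the time-translation-group resolving system
for `n = 1`, `q ≠ -2` (plus-sign branch). -/
theorem resolving_solution_trans_plus
    (p q k ε : ℝ)
    (hp : 0 < p) (hk : 0 < k) (hq2 : 0 < q + 2) (hq : q ≠ 0) (hq1 : q ≠ -1)
    (hε : ε = 1 ∨ ε = -1)
    (G H : ℝ → ℝ → ℝ)
    (hGdef : ∀ x v : ℝ, G x v =
      ((q + 4) / (q + 2)) * (p * v + Real.sqrt (p * k) * v ^ (1 + q / 2)))
    (hHdef : ∀ x v : ℝ, H x v =
      ε * (Real.sqrt (2 * p / (q + 2)) * v + Real.sqrt (2 * k / (q + 2)) * v ^ (1 + q / 2))) :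
    ∀ x v : ℝ, 0 < x → 0 < v →
      deriv (fun s => G s v) x + H x v * deriv (fun w => G x w) v
        - G x v * deriv (fun w => H x w) v = 0 ∧
      G x v - deriv (fun s => H s v) x - H x v * deriv (fun w => H x w) v
        = (p - k * v ^ q) * v := by
  intro x v hx hv
  have hq2' : q + 2 ≠ 0 := ne_of_gt hq2
  set a := Real.sqrt (2 * p / (q + 2)) with ha
  set b := Real.sqrt (2 * k / (q + 2)) with hb
  set c := Real.sqrt (p * k) with hc
  -- x-derivatives vanish
  have hGx : deriv (fun s => G s v) x = 0 := by
    have : (fun s => G s v) = fun _ : ℝ =>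
        ((q + 4) / (q + 2)) * (p * v + c * v ^ (1 + q / 2)) := funext fun s => hGdef s v
    rw [this, deriv_const]
  have hHx : deriv (fun s => H s v) x = 0 := by
    have : (fun s => H s v) = fun _ : ℝ =>
        ε * (a * v + b * v ^ (1 + q / 2)) := funext fun s => hHdef s v
    rw [this, deriv_const]
  -- derivative of the power function
  have hm : HasDerivAt (fun w : ℝ => w ^ (1 + q / 2)) ((1 + q / 2) * v ^ (q / 2)) v := by
    have h := Real.hasDerivAt_rpow_const (p := 1 + q / 2) (Or.inl hv.ne')
    have he : 1 + q / 2 - 1 = q / 2 := by ring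
    rwa [he] at h
  have hGv : deriv (fun w => G x w) v =
      ((q + 4) / (q + 2)) * (p + c * ((1 + q / 2) * v ^ (q / 2))) := by
    have hfe : (fun w => G x w) = fun w =>
        ((q + 4) / (q + 2)) * (p * w + c * w ^ (1 + q / 2)) := funext fun w => hGdef x w
    rw [hfe]
    have h := (((hasDerivAt_id v).const_mul p).add (hm.const_mul c)).const_mul
      ((q + 4) / (q + 2))
    have := h.deriv
    simpa using this
  have hHv : deriv (fun w => H x w) v =
      ε * (a + b * ((1 + q / 2) * v ^ (q / 2))) := by
    have hfe : (fun w => H x w) = fun w =>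
        ε * (a * w + b * w ^ (1 + q / 2)) := funext fun w => hHdef x w
    rw [hfe]
    have h := (((hasDerivAt_id v).const_mul a).add (hm.const_mul b)).const_mul ε
    have := h.deriv
    simpa using this
  -- power identities
  have e1 : v ^ (1 + q / 2) = v * v ^ (q / 2) := by
    rw [Real.rpow_add hv, Real.rpow_one]
  have e2 : v ^ q = v ^ (q / 2) * v ^ (q / 2) := by
    rw [← Real.rpow_add hv]
    norm_num
  -- sqrt identities
  have ha2 : a ^ 2 = 2 * p / (q + 2) := Real.sq_sqrt (by positivity)
  have hb2 : b ^ 2 = 2 * k / (q + 2) := Real.sq_sqrt (by positivity)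
  have hab : a * b = 2 * c / (q + 2) := by
    rw [ha, hb, hc, ← Real.sqrt_mul (by positivity)]
    rw [show 2 * p / (q + 2) * (2 * k / (q + 2)) = (2 / (q + 2)) ^ 2 * (p * k) by
      field_simp]
    rw [Real.sqrt_mul (sq_nonneg _), Real.sqrt_sq (by positivity)]
    ring
  have hac : a * c = p * b := by
    rw [ha, hb, hc, ← Real.sqrt_mul (by positivity)]
    rw [show 2 * p / (q + 2) * (p * k) = p ^ 2 * (2 * k / (q + 2)) by field_simp]
    rw [Real.sqrt_mul (sq_nonneg _), Real.sqrt_sq hp.le]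
  have hε2 : ε * ε = 1 := by rcases hε with h | h <;> rw [h] <;> norm_num
  constructor
  · rw [hGx, hGv, hHv, hGdef, hHdef, e1]
    linear_combination (ε * ((q + 4) / (q + 2)) * v * v ^ (q / 2) * (q / 2)) * hac
  · rw [hHx, hHv, hGdef, hHdef, e1, e2]
    linear_combination (norm := (field_simp; ring)) (-v * (a + b * v ^ (q / 2)) *
        (a + b * ((1 + q / 2) * v ^ (q / 2)))) * hε2 + (-v) * ha2 +
      (-v * v ^ (q / 2) * (2 + q / 2)) * hab + (-v * v ^ (q / 2) * v ^ (q / 2) * (1 + q / 2)) * hb2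
end

section
/- Let p, q, k be real constants with p > 0, k > 0, q + 2 > 0, q ≠ 0, q ≠ −1, let n = 1, and let ε ∈ {1, −1}. Define for x > 0, v > 0: G(x,v) := ((q+4)/(q+2)) (p v − (p k)^{1/2} v^{1+q/2}) and H(x,v) := ε ((2p/(q+2))^{1/2} v − (2k/(q+2))^{1/2} v^{1+q/2}). Then (G,H) satisfies the time-translation-group resolving system G_x + H G_v − G H_v = 0 and G − H_x − H H_v = (p − k v^q) v for all x > 0, v > 0. -/
/-- Explicit translation-invariant solution of the time-translation-group resolving system
for `n = 1`, `q ≠ -2` (minus-sign branch). -/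
theorem resolving_solution_trans_minus
    (p q k ε : ℝ)
    (hp : 0 < p) (hk : 0 < k) (hq2 : 0 < q + 2) (hq : q ≠ 0) (hq1 : q ≠ -1)
    (hε : ε = 1 ∨ ε = -1)
    (G H : ℝ → ℝ → ℝ)
    (hGdef : ∀ x v : ℝ, G x v =
      ((q + 4) / (q + 2)) * (p * v - Real.sqrt (p * k) * v ^ (1 + q / 2)))
    (hHdef : ∀ x v : ℝ, H x v =
      ε * (Real.sqrt (2 * p / (q + 2)) * v - Real.sqrt (2 * k / (q + 2)) * v ^ (1 + q / 2))) :
    ∀ x v : ℝ, 0 < x → 0 < v →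
      deriv (fun s => G s v) x + H x v * deriv (fun w => G x w) v
        - G x v * deriv (fun w => H x w) v = 0 ∧
      G x v - deriv (fun s => H s v) x - H x v * deriv (fun w => H x w) v
        = (p - k * v ^ q) * v := by
  intro x v hx hv
  have hq2' : (q + 2) ≠ 0 := ne_of_gt hq2
  -- x-derivatives vanish
  have hGx : deriv (fun s => G s v) x = 0 := by
    rw [show (fun s => G s v) = fun _ : ℝ =>
      ((q + 4) / (q + 2)) * (p * v - Real.sqrt (p * k) * v ^ (1 + q / 2))
      from funext fun s => hGdef s v]
    simp
  have hHx : deriv (fun s => H s v) x = 0 := by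
    rw [show (fun s => H s v) = fun _ : ℝ =>
      ε * (Real.sqrt (2 * p / (q + 2)) * v - Real.sqrt (2 * k / (q + 2)) * v ^ (1 + q / 2))
      from funext fun s => hHdef s v]
    simp
  -- derivative of the power function
  have hpow : HasDerivAt (fun w : ℝ => w ^ (1 + q / 2)) ((1 + q / 2) * v ^ (q / 2)) v := by
    have h := Real.hasDerivAt_rpow_const (x := v) (p := 1 + q / 2) (Or.inl (ne_of_gt hv))
    simpa [show 1 + q / 2 - 1 = q / 2 by ring] using h
  have hGv : HasDerivAt (fun w => G x w)
      (((q + 4) / (q + 2)) * (p - Real.sqrt (p * k) * ((1 + q / 2) * v ^ (q / 2)))) v := by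
    rw [show (fun w => G x w) = fun w =>
      ((q + 4) / (q + 2)) * (p * w - Real.sqrt (p * k) * w ^ (1 + q / 2))
      from funext (hGdef x)]
    have h1 : HasDerivAt (fun w : ℝ => p * w - Real.sqrt (p * k) * w ^ (1 + q / 2))
        (p - Real.sqrt (p * k) * ((1 + q / 2) * v ^ (q / 2))) v := by
      simpa [Pi.sub_def] using ((hasDerivAt_id v).const_mul p).sub (hpow.const_mul (Real.sqrt (p * k)))
    exact h1.const_mul _
  have hHv : HasDerivAt (fun w => H x w)
      (ε * (Real.sqrt (2 * p / (q + 2)) - Real.sqrt (2 * k / (q + 2)) * ((1 + q / 2) * v ^ (q / 2)))) v := by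
    rw [show (fun w => H x w) = fun w =>
      ε * (Real.sqrt (2 * p / (q + 2)) * w - Real.sqrt (2 * k / (q + 2)) * w ^ (1 + q / 2))
      from funext (hHdef x)]
    have h1 : HasDerivAt (fun w : ℝ =>
        Real.sqrt (2 * p / (q + 2)) * w - Real.sqrt (2 * k / (q + 2)) * w ^ (1 + q / 2))
        (Real.sqrt (2 * p / (q + 2)) - Real.sqrt (2 * k / (q + 2)) * ((1 + q / 2) * v ^ (q / 2))) v := by
      simpa [Pi.sub_def] using ((hasDerivAt_id v).const_mul (Real.sqrt (2 * p / (q + 2)))).sub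
        (hpow.const_mul (Real.sqrt (2 * k / (q + 2))))
    exact h1.const_mul _
  -- square-root decompositions
  have hs1 : Real.sqrt (2 * p / (q + 2)) = Real.sqrt p * Real.sqrt (2 / (q + 2)) := by
    rw [show 2 * p / (q + 2) = p * (2 / (q + 2)) by ring, Real.sqrt_mul hp.le]
  have hs2 : Real.sqrt (2 * k / (q + 2)) = Real.sqrt k * Real.sqrt (2 / (q + 2)) := by
    rw [show 2 * k / (q + 2) = k * (2 / (q + 2)) by ring, Real.sqrt_mul hk.le]
  have hs3 : Real.sqrt (p * k) = Real.sqrt p * Real.sqrt k := Real.sqrt_mul hp.le k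
  -- algebraic relations among atoms
  have hp2 : (Real.sqrt p) ^ 2 = p := Real.sq_sqrt hp.le
  have hk2 : (Real.sqrt k) ^ 2 = k := Real.sq_sqrt hk.le
  have hu2 : (Real.sqrt (2 / (q + 2))) ^ 2 = 2 * (q + 2)⁻¹ := by
    rw [Real.sq_sqrt (by positivity)]; ring
  have hw : (q + 2)⁻¹ * (q + 2) = 1 := inv_mul_cancel₀ hq2'
  have hε2 : ε ^ 2 = 1 := by rcases hε with h | h <;> simp [h]
  have hB : v ^ (q / 2) * v ^ (q / 2) = v ^ q := by
    rw [← Real.rpow_add hv, show q / 2 + q / 2 = q by ring]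
  have hm : v ^ (1 + q / 2) = v * v ^ (q / 2) := by
    rw [Real.rpow_add hv, Real.rpow_one]
  have hC : (q + 4) / (q + 2) = (q + 4) * (q + 2)⁻¹ := div_eq_mul_inv _ _
  set rp := Real.sqrt p
  set rk := Real.sqrt k
  set u := Real.sqrt (2 / (q + 2))
  constructor
  · rw [hGx, hHdef x v, hGv.deriv, hGdef x v, hHv.deriv, hs1, hs2, hs3, hm, hC]
    linear_combination
      (-(ε * (q + 4) * (q + 2)⁻¹ * u * rk * v * v ^ (q / 2) * (q / 2))) * hp2
  · rw [hHx, hGdef x v, hHdef x v, hHv.deriv, hs1, hs2, hs3, hm, hC]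
    linear_combination
      (-(rp ^ 2 * u ^ 2 * v - rp * rk * u ^ 2 * (1 + q / 2) * v * v ^ (q / 2)
          - rp * rk * u ^ 2 * v * v ^ (q / 2)
          + rk ^ 2 * u ^ 2 * (1 + q / 2) * v * (v ^ (q / 2)) ^ 2)) * hε2
      + (-(rp ^ 2 * v - rp * rk * (1 + q / 2) * v * v ^ (q / 2) - rp * rk * v * v ^ (q / 2)
          + rk ^ 2 * (1 + q / 2) * v * (v ^ (q / 2)) ^ 2)) * hu2
      + (-2 * (q + 2)⁻¹ * v) * hp2
      + (-2 * (q + 2)⁻¹ * (1 + q / 2) * v * (v ^ (q / 2)) ^ 2) * hk2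
      + (p * v - k * v * (v ^ (q / 2)) ^ 2) * hw
      + (-(k * v)) * hB
end

section
/- Let p, k, c₁ be real constants with p > 0 and k > 0, let n = 1 and q = 2, and let ε ∈ {1, −1}. Define for x > 0, v > 0: G(x,v) := (3/2)(p v + ε (p k)^{1/2} tanh((p/2)^{1/2}(x + c₁)) v²) and H(x,v) := ε (k/2)^{1/2} v² + (p/2)^{1/2} tanh((p/2)^{1/2}(x + c₁)) v. Then (G,H) satisfies the time-translation-group resolving system G_x + H G_v − G H_v = 0 and G − H_x − H H_v = (p − k v²) v for all x > 0, v > 0. -/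
lemma hasDerivAt_tanh' (y : ℝ) :
    HasDerivAt Real.tanh (1 - Real.tanh y ^ 2) y := by
  have h := (Real.hasDerivAt_sinh y).div (Real.hasDerivAt_cosh y) (Real.cosh_pos y).ne'
  have heq : Real.tanh = fun t => Real.sinh t / Real.cosh t := by
    funext t; exact Real.tanh_eq_sinh_div_cosh t
  rw [heq]
  refine h.congr_deriv ?_
  simp only
  have hc := (Real.cosh_pos y).ne'
  field_simp

/-- Explicit tanh-solution of the time-translation-group resolving system
for `n = 1`, `q = 2`, `p > 0`. -/
theorem resolving_solution_tanh
    (p k c₁ ε : ℝ) (hp : 0 < p) (hk : 0 < k) (hε : ε = 1 ∨ ε = -1)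
    (G H : ℝ → ℝ → ℝ)
    (hGdef : ∀ x v : ℝ, G x v =
      (3 / 2) * (p * v + ε * Real.sqrt (p * k)
        * Real.tanh (Real.sqrt (p / 2) * (x + c₁)) * v ^ 2))
    (hHdef : ∀ x v : ℝ, H x v =
      ε * Real.sqrt (k / 2) * v ^ 2
        + Real.sqrt (p / 2) * Real.tanh (Real.sqrt (p / 2) * (x + c₁)) * v) :
    ∀ x v : ℝ, 0 < x → 0 < v →
      deriv (fun s => G s v) x + H x v * deriv (fun w => G x w) v
        - G x v * deriv (fun w => H x w) v = 0 ∧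
      G x v - deriv (fun s => H s v) x - H x v * deriv (fun w => H x w) v
        = (p - k * v ^ 2) * v := by
  intro x v hx hv
  set A := Real.sqrt (p / 2) with hA
  set B := Real.sqrt (k / 2) with hB
  set C := Real.sqrt (p * k) with hC
  have hA0 : 0 ≤ A := Real.sqrt_nonneg _
  have hB0 : 0 ≤ B := Real.sqrt_nonneg _
  have hA2 : A ^ 2 = p / 2 := by rw [hA]; exact Real.sq_sqrt (by positivity)
  have hB2 : B ^ 2 = k / 2 := by rw [hB]; exact Real.sq_sqrt (by positivity)
  have h4 : (2 * (A * B)) ^ 2 = p * k := by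
    linear_combination (4 * B ^ 2) * hA2 + (2 * p) * hB2
  have hC2 : C = 2 * (A * B) := by
    rw [hC, ← h4, Real.sqrt_sq (by positivity)]
  set T := Real.tanh (A * (x + c₁)) with hT
  -- derivative of inner linear function
  have hlin : HasDerivAt (fun s : ℝ => A * (s + c₁)) A x := by
    simpa using ((hasDerivAt_id' (x := x)).add_const c₁).const_mul A
  have htan : HasDerivAt (fun s : ℝ => Real.tanh (A * (s + c₁))) ((1 - T ^ 2) * A) x := by
    rw [hT]
    exact (hasDerivAt_tanh' (A * (x + c₁))).comp x hlin
  -- deriv of G in x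
  have hGx : HasDerivAt (fun s => G s v)
      ((3 / 2) * (ε * C * ((1 - T ^ 2) * A) * v ^ 2)) x := by
    have hfe : (fun s => G s v)
        = fun s => (3 / 2) * (p * v + ε * C * Real.tanh (A * (s + c₁)) * v ^ 2) :=
      funext fun s => hGdef s v
    rw [hfe]
    exact ((((htan.const_mul (ε * C)).mul_const (v ^ 2)).const_add (p * v)).const_mul (3 / 2))
  -- deriv of G in v
  have hGv : HasDerivAt (fun w => G x w)
      ((3 / 2) * (p * 1 + ε * C * T * ((2 : ℕ) * v ^ 1))) v := by
    have hfe : (fun w => G x w)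
        = fun w => (3 / 2) * (p * w + ε * C * T * w ^ 2) :=
      funext fun w => hGdef x w
    rw [hfe]
    exact (((hasDerivAt_id' (x := v)).const_mul p).add
      ((hasDerivAt_pow 2 v).const_mul (ε * C * T))).const_mul (3 / 2)
  -- deriv of H in x
  have hHx : HasDerivAt (fun s => H s v) (A * ((1 - T ^ 2) * A) * v) x := by
    have hfe : (fun s => H s v)
        = fun s => A * Real.tanh (A * (s + c₁)) * v + ε * B * v ^ 2 :=
      funext fun s => by rw [hHdef s v]; ring
    rw [hfe]
    exact (((htan.const_mul A).mul_const v).add_const (ε * B * v ^ 2))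
  -- deriv of H in v
  have hHv : HasDerivAt (fun w => H x w)
      (ε * B * ((2 : ℕ) * v ^ 1) + A * T * 1) v := by
    have hfe : (fun w => H x w) = fun w => ε * B * w ^ 2 + A * T * w :=
      funext fun w => hHdef x w
    rw [hfe]
    exact ((hasDerivAt_pow 2 v).const_mul (ε * B)).add
      ((hasDerivAt_id' (x := v)).const_mul (A * T))
  rw [hGx.deriv, hGv.deriv, hHx.deriv, hHv.deriv, hGdef x v, hHdef x v]
  rw [hC2]
  have hε2 : ε ^ 2 = 1 := by rcases hε with h | h <;> rw [h] <;> norm_num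
  constructor
  · push_cast
    linear_combination (3 * ε * B * v ^ 2) * hA2
  · push_cast
    linear_combination (-v) * hA2 + (-2 * v ^ 3) * hB2 + (-2 * v ^ 3 * B ^ 2) * hε2
end

section
/- Let p, k, c₁ be real constants with p < 0 and k > 0, let n = 1 and q = 2, and let ε ∈ {1, −1}. Define, for all x > 0 with cos((−p/2)^{1/2}(x + c₁)) ≠ 0 and all v > 0: G(x,v) := (3/2)(p v − ε (−p k)^{1/2} tan((−p/2)^{1/2}(x + c₁)) v²) and H(x,v) := ε (k/2)^{1/2} v² − (−p/2)^{1/2} tan((−p/2)^{1/2}(x + c₁)) v. Then (G,H) satisfies the time-translation-group resolving system G_x + H G_v − G H_v = 0 and G − H_x − H H_v = (p − k v²) v at all such points (x,v). -/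
/-- Explicit tan-solution of the time-translation-group resolving system
for `n = 1`, `q = 2`, `p < 0`. -/
theorem resolving_solution_tan
    (p k c₁ ε : ℝ) (hp : p < 0) (hk : 0 < k) (hε : ε = 1 ∨ ε = -1)
    (G H : ℝ → ℝ → ℝ)
    (hGdef : ∀ x v : ℝ, G x v =
      (3 / 2) * (p * v - ε * Real.sqrt (-(p * k))
        * Real.tan (Real.sqrt (-p / 2) * (x + c₁)) * v ^ 2))
    (hHdef : ∀ x v : ℝ, H x v =
      ε * Real.sqrt (k / 2) * v ^ 2
        - Real.sqrt (-p / 2) * Real.tan (Real.sqrt (-p / 2) * (x + c₁)) * v) :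
    ∀ x v : ℝ, 0 < x → 0 < v →
      Real.cos (Real.sqrt (-p / 2) * (x + c₁)) ≠ 0 →
      deriv (fun s => G s v) x + H x v * deriv (fun w => G x w) v
        - G x v * deriv (fun w => H x w) v = 0 ∧
      G x v - deriv (fun s => H s v) x - H x v * deriv (fun w => H x w) v
        = (p - k * v ^ 2) * v := by
  intro x v hx hv hcos
  set a := Real.sqrt (-p / 2) with haa
  set b := Real.sqrt (-(p * k)) with hbb
  set c := Real.sqrt (k / 2) with hcc
  set T := Real.tan (a * (x + c₁)) with hTT
  set C := Real.cos (a * (x + c₁)) with hCC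
  have hpk : (0:ℝ) ≤ -(p * k) := by nlinarith
  have ha2 : a ^ 2 = -p / 2 := Real.sq_sqrt (by linarith)
  have hc2 : c ^ 2 = k / 2 := Real.sq_sqrt (by positivity)
  have hb2 : b ^ 2 = -(p * k) := Real.sq_sqrt hpk
  have hab : a * b = -p * c := by
    rw [haa, hbb, hcc, ← Real.sqrt_mul (by linarith : (0:ℝ) ≤ -p / 2)]
    have h1 : -p / 2 * -(p * k) = p ^ 2 * (k / 2) := by ring
    rw [h1, Real.sqrt_mul (sq_nonneg p), Real.sqrt_sq_eq_abs, abs_of_neg hp]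
  have hacb : 2 * (a * c) = b := by
    have h1 : (2 * (a * c)) ^ 2 = b ^ 2 := by
      have := mul_pow a c 2
      nlinarith [ha2, hc2, hb2]
    have h2 : 2 * (a * c) = Real.sqrt ((2 * (a * c)) ^ 2) :=
      (Real.sqrt_sq (by positivity)).symm
    rw [h2, h1, Real.sqrt_sq (Real.sqrt_nonneg _)]
  have hε2 : ε ^ 2 = 1 := by rcases hε with h | h <;> simp [h]
  have hT2 : T ^ 2 * C ^ 2 = 1 - C ^ 2 := by
    rw [hTT, hCC, Real.tan_eq_sin_div_cos]
    have hc0 : Real.cos (a * (x + c₁)) ≠ 0 := hcos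
    rw [div_pow, div_mul_cancel₀ _ (pow_ne_zero 2 hc0)]
    linarith [Real.sin_sq_add_cos_sq (a * (x + c₁))]
  -- derivative of tan(a*(s+c₁)) in s
  have hu : HasDerivAt (fun s : ℝ => a * (s + c₁)) a x := by
    simpa using ((hasDerivAt_id x).add_const c₁).const_mul a
  have htan : HasDerivAt (fun s : ℝ => Real.tan (a * (s + c₁)))
      (1 / C ^ 2 * a) x :=
    HasDerivAt.comp (h := fun s : ℝ => a * (s + c₁)) x (Real.hasDerivAt_tan hcos) hu
  have hGx : deriv (fun s => G s v) x
      = (3 / 2) * (0 - ε * b * (1 / C ^ 2 * a) * v ^ 2) := by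
    have hfun : (fun s => G s v)
        = fun s => (3 / 2) * (p * v - ε * b * Real.tan (a * (s + c₁)) * v ^ 2) :=
      funext fun s => hGdef s v
    rw [hfun]
    exact ((((htan.const_mul (ε * b)).mul_const (v ^ 2)).const_sub
      (p * v)).const_mul (3 / 2)).deriv.trans (by ring)
  have hGv : deriv (fun w => G x w) v
      = (3 / 2) * (p * 1 - ε * b * T * (2 * v)) := by
    have hfun : (fun w => G x w)
        = fun w => (3 / 2) * (p * w - ε * b * T * w ^ 2) :=
      funext fun w => hGdef x w
    rw [hfun]
    have h1 : HasDerivAt (fun w : ℝ => p * w) (p * 1) v :=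
      (hasDerivAt_id v).const_mul p
    have h2 : HasDerivAt (fun w : ℝ => ε * b * T * w ^ 2)
        (ε * b * T * (2 * v)) v := by
      simpa using (hasDerivAt_pow 2 v).const_mul (ε * b * T)
    exact ((h1.sub h2).const_mul (3 / 2)).deriv
  have hHx : deriv (fun s => H s v) x = 0 - a * (1 / C ^ 2 * a) * v := by
    have hfun : (fun s => H s v)
        = fun s => ε * c * v ^ 2 - a * Real.tan (a * (s + c₁)) * v :=
      funext fun s => hHdef s v
    rw [hfun]
    simpa using (((htan.const_mul a).mul_const v).const_sub (ε * c * v ^ 2)).deriv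
  have hHv : deriv (fun w => H x w) v = ε * c * (2 * v) - a * T * 1 := by
    have hfun : (fun w => H x w) = fun w => ε * c * w ^ 2 - a * T * w :=
      funext fun w => hHdef x w
    rw [hfun]
    have h1 : HasDerivAt (fun w : ℝ => ε * c * w ^ 2) (ε * c * (2 * v)) v := by
      simpa using (hasDerivAt_pow 2 v).const_mul (ε * c)
    have h2 : HasDerivAt (fun w : ℝ => a * T * w) (a * T * 1) v :=
      (hasDerivAt_id v).const_mul (a * T)
    exact (h1.sub h2).deriv
  have hC2 : C ^ 2 ≠ 0 := pow_ne_zero 2 hcos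
  constructor
  · rw [hGx, hGv, hHv, hGdef, hHdef, ← hTT]
    field_simp
    linear_combination (3 * ε * v ^ 2 * a * b) * hT2
      + (-3 * ε * v ^ 2 * C ^ 2) * hab
  · rw [hHx, hHv, hGdef, hHdef, ← hTT]
    field_simp
    linear_combination (-(2 * v * a ^ 2)) * hT2 + (2 * v * C ^ 2) * ha2
      + (-(2 * v ^ 3 * C ^ 2 * ε ^ 2) - 2 * v ^ 3 * C ^ 2) * hc2
      + (-(2 * v ^ 3 * C ^ 2 * c ^ 2) - v ^ 3 * C ^ 2 * k) * hε2
      + (3 * ε * T * v ^ 2 * C ^ 2) * hacb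
end

section
/- Let p, k be real constants with p > 0 and k ∈ {1, −1}, let n = 1 and q = −3/2. Define for x > 0, v > 0: G(x,v) := 3 (p v + (k² p)^{1/3} + (k p²)^{1/3} v^{1/2}) and H(x,v) := −(2/p)^{1/2} (p v + (k² p)^{1/3} + (k p²)^{1/3} v^{1/2}), where cube roots are real cube roots. Then (G,H) satisfies the time-translation-group resolving system G_x + H G_v − G H_v = 0 and G − H_x − H H_v = (p − k v^{−3/2}) v for all x > 0, v > 0. -/
/-- The real cube root of a real number. -/
noncomputable def realCbrt (y : ℝ) : ℝ := Real.sign y * |y| ^ ((1 : ℝ) / 3)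

/-- Explicit multi-term translation-invariant solution of the time-translation-group
resolving system for `n = 1`, `q = -3/2`, `p > 0`. -/
theorem resolving_solution_q_neg_three_halves
    (p k : ℝ) (hp : 0 < p) (hk : k = 1 ∨ k = -1)
    (G H : ℝ → ℝ → ℝ)
    (hGdef : ∀ x v : ℝ, G x v =
      3 * (p * v + realCbrt (k ^ 2 * p) + realCbrt (k * p ^ 2) * v ^ ((1 : ℝ) / 2)))
    (hHdef : ∀ x v : ℝ, H x v =
      -Real.sqrt (2 / p)
        * (p * v + realCbrt (k ^ 2 * p) + realCbrt (k * p ^ 2) * v ^ ((1 : ℝ) / 2))) :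
    ∀ x v : ℝ, 0 < x → 0 < v →
      deriv (fun s => G s v) x + H x v * deriv (fun w => G x w) v
        - G x v * deriv (fun w => H x w) v = 0 ∧
      G x v - deriv (fun s => H s v) x - H x v * deriv (fun w => H x w) v
        = (p - k * v ^ (-(3 : ℝ) / 2)) * v := by
  have hk2 : k ^ 2 = 1 := by rcases hk with h | h <;> subst h <;> norm_num
  set u : ℝ := p ^ ((1:ℝ)/3) with hu
  have hu3 : u ^ 3 = p := by
    rw [hu, ← Real.rpow_natCast (p ^ ((1:ℝ)/3)) 3, ← Real.rpow_mul hp.le]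
    norm_num
  have hA : realCbrt (k ^ 2 * p) = u := by
    rw [hk2, one_mul, realCbrt, Real.sign_of_pos hp, abs_of_pos hp, one_mul, hu]
  have hB : realCbrt (k * p ^ 2) = k * u ^ 2 := by
    have h2 : |p ^ 2| ^ ((1:ℝ)/3) = u ^ 2 := by
      rw [abs_of_pos (by positivity), ← Real.rpow_natCast p 2, ← Real.rpow_mul hp.le,
        hu, ← Real.rpow_natCast (p ^ ((1:ℝ)/3)) 2, ← Real.rpow_mul hp.le]
      norm_num
    rcases hk with h | h <;> subst h
    · rw [realCbrt, one_mul, Real.sign_of_pos (by positivity), h2]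
    · rw [realCbrt, show (-1 : ℝ) * p ^ 2 = -(p ^ 2) by ring,
        Real.sign_of_neg (by simp only [neg_lt_zero]; positivity), abs_neg, h2]
  simp only [hA, hB] at hGdef hHdef
  set c : ℝ := Real.sqrt (2 / p) with hc
  have hc2 : c * c * u ^ 3 = 2 := by
    rw [hc, Real.mul_self_sqrt (by positivity), hu3]
    field_simp
  intro x v hx hv
  set s : ℝ := v ^ ((1:ℝ)/2) with hs
  set t : ℝ := v ^ ((1:ℝ)/2 - 1) with hts
  have hst : s * t = 1 := by
    rw [hs, hts, ← Real.rpow_add hv]; norm_num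
  have hvt : v * t = s := by
    rw [hs, hts]
    nth_rewrite 1 [← Real.rpow_one v]
    rw [← Real.rpow_add hv]; norm_num
  have hXv : v ^ (-(3:ℝ)/2) * v = t := by
    rw [hts]
    nth_rewrite 2 [← Real.rpow_one v]
    rw [← Real.rpow_add hv]; norm_num
  have hF : HasDerivAt (fun w : ℝ => p * w + u + k * u ^ 2 * w ^ ((1:ℝ)/2))
      (p + k * u ^ 2 * ((1/2) * t)) v := by
    have h1 : HasDerivAt (fun w : ℝ => p * w + u) p v := by
      simpa using ((hasDerivAt_id v).const_mul p).add_const u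
    have h2 : HasDerivAt (fun w : ℝ => w ^ ((1:ℝ)/2)) ((1/2) * v ^ ((1:ℝ)/2 - 1)) v :=
      Real.hasDerivAt_rpow_const (Or.inl hv.ne')
    have h3 := h1.add (h2.const_mul (k * u ^ 2))
    exact h3
  have hGx : deriv (fun y => G y v) x = 0 := by
    have h : (fun y : ℝ => G y v) = fun _ => 3 * (p * v + u + k * u ^ 2 * s) :=
      funext fun y => by rw [hGdef y v, hs]
    rw [h, deriv_const]
  have hHx : deriv (fun y => H y v) x = 0 := by
    have h : (fun y : ℝ => H y v) = fun _ => -c * (p * v + u + k * u ^ 2 * s) :=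
      funext fun y => by rw [hHdef y v, hs]
    rw [h, deriv_const]
  have hGv : deriv (fun w => G x w) v = 3 * (p + k * u ^ 2 * ((1/2) * t)) := by
    have h : (fun w : ℝ => G x w) = fun w => 3 * (p * w + u + k * u ^ 2 * w ^ ((1:ℝ)/2)) :=
      funext fun w => hGdef x w
    rw [h]
    exact (hF.const_mul 3).deriv
  have hHv : deriv (fun w => H x w) v = -c * (p + k * u ^ 2 * ((1/2) * t)) := by
    have h : (fun w : ℝ => H x w) = fun w => -c * (p * w + u + k * u ^ 2 * w ^ ((1:ℝ)/2)) :=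
      funext fun w => hHdef x w
    rw [h]
    exact (hF.const_mul (-c)).deriv
  rw [hGdef x v, hHdef x v]
  constructor
  · rw [hGx, hGv, hHv, ← hs]; ring
  · rw [hHx, hHv, ← hs, ← hu3]
    linear_combination (-((u^2*v + 1 + k*u*s) * (u + k*t/2))) * hc2 + k * hXv
      + (-(k*u^2)) * hvt + (-(k^2*u)) * hst + (-u) * hk2
end

section
/- Let p be a real constant with p > 0, let k = −1, n = 1 and q = −8/3. Define for x > 0, v > 0: G(x,v) := 4 (p v + p^{1/2} v^{−1/3} + (4 p³)^{1/4} v^{1/3}) and H(x,v) := −(3/p)^{1/2} (p v + p^{1/2} v^{−1/3} + (4 p³)^{1/4} v^{1/3}). Then (G,H) satisfies the time-translation-group resolving system G_x + H G_v − G H_v = 0 and G − H_x − H H_v = (p + v^{−8/3}) v for all x > 0, v > 0. -/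
set_option maxHeartbeats 1000000 in
/-- Explicit multi-term translation-invariant solution of the time-translation-group
resolving system for `n = 1`, `q = -8/3`, `k = -1`, `p > 0`. -/
theorem resolving_solution_q_neg_eight_thirds
    (p : ℝ) (hp : 0 < p)
    (G H : ℝ → ℝ → ℝ)
    (hGdef : ∀ x v : ℝ, G x v =
      4 * (p * v + Real.sqrt p * v ^ (-(1 : ℝ) / 3)
        + (4 * p ^ 3) ^ ((1 : ℝ) / 4) * v ^ ((1 : ℝ) / 3)))
    (hHdef : ∀ x v : ℝ, H x v =
      -Real.sqrt (3 / p) * (p * v + Real.sqrt p * v ^ (-(1 : ℝ) / 3)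
        + (4 * p ^ 3) ^ ((1 : ℝ) / 4) * v ^ ((1 : ℝ) / 3))) :
    ∀ x v : ℝ, 0 < x → 0 < v →
      deriv (fun s => G s v) x + H x v * deriv (fun w => G x w) v
        - G x v * deriv (fun w => H x w) v = 0 ∧
      G x v - deriv (fun s => H s v) x - H x v * deriv (fun w => H x w) v
        = (p + v ^ (-(8 : ℝ) / 3)) * v := by
  intro x v hx hv
  set b : ℝ := Real.sqrt p with hb
  set a : ℝ := (4 * p ^ 3) ^ ((1 : ℝ) / 4) with ha
  set c : ℝ := Real.sqrt (3 / p) with hc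
  set F : ℝ := p * v + b * v ^ (-(1 : ℝ) / 3) + a * v ^ ((1 : ℝ) / 3) with hF
  set D : ℝ := p + b * (-(1 : ℝ) / 3 * v ^ (-(1 : ℝ) / 3 - 1))
      + a * ((1 : ℝ) / 3 * v ^ ((1 : ℝ) / 3 - 1)) with hD
  have hFd : HasDerivAt (fun w : ℝ => p * w + b * w ^ (-(1 : ℝ) / 3)
      + a * w ^ ((1 : ℝ) / 3)) D v := by
    have h1 : HasDerivAt (fun w : ℝ => p * w) (p * 1) v := (hasDerivAt_id v).const_mul p
    have h2 : HasDerivAt (fun w : ℝ => w ^ (-(1 : ℝ) / 3)) (-(1:ℝ)/3 * v ^ (-(1:ℝ)/3 - 1)) v :=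
      Real.hasDerivAt_rpow_const (Or.inl hv.ne')
    have h3 : HasDerivAt (fun w : ℝ => w ^ ((1 : ℝ) / 3)) ((1:ℝ)/3 * v ^ ((1:ℝ)/3 - 1)) v :=
      Real.hasDerivAt_rpow_const (Or.inl hv.ne')
    have h := (h1.add (h2.const_mul b)).add (h3.const_mul a)
    exact h.congr_deriv (by rw [mul_one, hD])
  have hGv : deriv (fun w => G x w) v = 4 * D := by
    have : (fun w => G x w) = fun w : ℝ => 4 * (p * w + b * w ^ (-(1 : ℝ) / 3)
        + a * w ^ ((1 : ℝ) / 3)) := by funext w; rw [hGdef]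
    rw [this]; exact (hFd.const_mul 4).deriv
  have hHv : deriv (fun w => H x w) v = -c * D := by
    have : (fun w => H x w) = fun w : ℝ => -c * (p * w + b * w ^ (-(1 : ℝ) / 3)
        + a * w ^ ((1 : ℝ) / 3)) := by funext w; rw [hHdef]
    rw [this]; exact (hFd.const_mul (-c)).deriv
  have hGx : deriv (fun s => G s v) x = 0 := by
    have : (fun s : ℝ => G s v) = fun _ : ℝ => 4 * F := by funext s; rw [hGdef]
    rw [this, deriv_const]
  have hHx : deriv (fun s => H s v) x = 0 := by
    have : (fun s : ℝ => H s v) = fun _ : ℝ => -c * F := by funext s; rw [hHdef]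
    rw [this, deriv_const]
  have hGxv : G x v = 4 * F := hGdef x v
  have hHxv : H x v = -c * F := hHdef x v
  refine ⟨by rw [hGx, hGxv, hHxv, hGv, hHv]; ring, ?_⟩
  rw [hGxv, hHxv, hHx, hHv]
  -- now: 4*F - 0 - (-c*F)*(-c*D) = (p + v^(-8/3))*v
  have hc2 : c * c = 3 / p := Real.mul_self_sqrt (by positivity)
  have hb2 : b * b = p := Real.mul_self_sqrt hp.le
  have hbnn : 0 ≤ b := Real.sqrt_nonneg p
  have ha2 : a * a = 2 * p * b := by
    have h1 : a * a = (4 * p ^ 3) ^ ((1 : ℝ) / 2) := by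
      rw [ha, ← Real.rpow_add (by positivity)]; norm_num
    have h2 : (4 : ℝ) * p ^ 3 = (2 * p * b) ^ 2 := by nlinarith [hb2]
    rw [h1, ← Real.sqrt_eq_rpow, h2, Real.sqrt_sq (by positivity)]
  -- substitute t = v ^ (1/3)
  set t : ℝ := v ^ ((1 : ℝ) / 3) with htdef
  have ht : 0 < t := Real.rpow_pos_of_pos hv _
  have key : ∀ m : ℤ, v ^ ((1 : ℝ) / 3 * (m : ℝ)) = t ^ m := by
    intro m
    rw [Real.rpow_mul hv.le, Real.rpow_intCast]
  have e3 : v = t ^ 3 := by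
    have := key 3
    norm_num at this
    exact this
  have e1 : v ^ (-(1 : ℝ) / 3) = t⁻¹ := by
    have := key (-1)
    rw [show ((1:ℝ)/3 * ((-1 : ℤ) : ℝ)) = -(1:ℝ)/3 by push_cast; ring] at this
    rw [this]
    simp
  have e4 : v ^ (-(1 : ℝ) / 3 - 1) = (t ^ 4)⁻¹ := by
    have := key (-4)
    rw [show ((1:ℝ)/3 * ((-4 : ℤ) : ℝ)) = -(1:ℝ)/3 - 1 by push_cast; ring] at this
    rw [this]
    simp
  have e2 : v ^ ((1 : ℝ) / 3 - 1) = (t ^ 2)⁻¹ := by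
    have := key (-2)
    rw [show ((1:ℝ)/3 * ((-2 : ℤ) : ℝ)) = (1:ℝ)/3 - 1 by push_cast; ring] at this
    rw [this]
    simp
  have e8 : v ^ (-(8 : ℝ) / 3) = (t ^ 8)⁻¹ := by
    have := key (-8)
    rw [show ((1:ℝ)/3 * ((-8 : ℤ) : ℝ)) = -(8:ℝ)/3 by push_cast; ring] at this
    rw [this]
    simp
  rw [hF, hD, e1, e2, e4, e8]
  rw [show v = t ^ 3 from e3]
  have hp0 : p ≠ 0 := hp.ne'
  have ht0 : t ≠ 0 := ht.ne'
  have hstep : ∀ X Y : ℝ, -c * X * (-c * Y) = (c * c) * (X * Y) := by intros; ring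
  rw [hstep, hc2]
  field_simp
  linear_combination hb2 - t^4 * ha2
end

section
/- Let n, k, c be real constants with n ∉ {2, 3} and k/((n−3)(n−2)) > 0, let p = 0 and q = 2/(2−n), and let ε ∈ {1, −1}. Define A := ε (k/((n−3)(n−2)))^{1/2} and u(t,r) := (A (r/2 − (n−4)(t+c)/r))^{n−2}, where the real power with exponent n−2 is taken. Then at every point (t,r) with r > 0 and A (r/2 − (n−4)(t+c)/r) > 0, the function u is positive and satisfies the reaction-diffusion equation u_t = u_rr + (n−1) r^{−1} u_r − k u^{q+1}. -/
/-- Explicit similarity solution of the reaction-diffusion equation with `p = 0`,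
`q = 2/(2-n)`, `n ∉ {2,3}`. -/
theorem similarity_solution
    (n k c p q ε : ℝ)
    (hn2 : n ≠ 2) (hn3 : n ≠ 3) (hk : 0 < k / ((n - 3) * (n - 2)))
    (hp : p = 0) (hq : q = 2 / (2 - n)) (hε : ε = 1 ∨ ε = -1)
    (A : ℝ) (hA : A = ε * Real.sqrt (k / ((n - 3) * (n - 2))))
    (u : ℝ → ℝ → ℝ)
    (hu : ∀ t r : ℝ, u t r = (A * (r / 2 - (n - 4) * (t + c) / r)) ^ (n - 2)) :
    ∀ t r : ℝ, 0 < r → 0 < A * (r / 2 - (n - 4) * (t + c) / r) →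
      0 < u t r ∧
      deriv (fun s => u s r) t =
        deriv (deriv (fun s => u t s)) r
          + (n - 1) * r⁻¹ * deriv (fun s => u t s) r
          - k * u t r ^ (q + 1) := by
  intro t r hr hpos
  have hn2' : n - 2 ≠ 0 := sub_ne_zero.mpr hn2
  have hn3' : n - 3 ≠ 0 := sub_ne_zero.mpr hn3
  have h2n : (2 : ℝ) - n ≠ 0 := fun h => hn2 (by linarith)
  have hr' : r ≠ 0 := hr.ne'
  set B : ℝ := (n - 4) * (t + c) with hB
  set v : ℝ := A * (r / 2 - B / r) with hv
  have hv0 : 0 < v := hpos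
  -- A^2 = k / ((n-3)(n-2))
  have hA2 : A ^ 2 = k / ((n - 3) * (n - 2)) := by
    rw [hA, mul_pow, Real.sq_sqrt hk.le]
    rcases hε with h | h <;> rw [h] <;> norm_num
  have hkval : k = A ^ 2 * ((n - 3) * (n - 2)) := by
    field_simp at hA2; linarith [hA2]
  -- positivity
  have hupos : 0 < u t r := by rw [hu]; exact Real.rpow_pos_of_pos hv0 _
  refine ⟨hupos, ?_⟩
  -- time derivative
  have hVt : HasDerivAt (fun s => A * (r / 2 - (n - 4) * (s + c) / r))
      (A * (-((n - 4) / r))) t := by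
    have h1 : HasDerivAt (fun s : ℝ => (n - 4) * (s + c) / r) ((n - 4) / r) t := by
      simpa using (((hasDerivAt_id t).add_const c).const_mul (n - 4)).div_const r
    exact (h1.const_sub (r / 2)).const_mul A
  have hut : HasDerivAt (fun s => u s r) (A * (-((n - 4) / r)) * (n - 2) * v ^ (n - 3)) t := by
    have h := hVt.rpow_const (p := n - 2) (Or.inl hv0.ne')
    have he : n - 2 - 1 = n - 3 := by ring
    rw [he] at h
    simp only [hu]
    exact h
  -- spatial derivative (first), valid near r
  have hV : ∀ s : ℝ, s ≠ 0 →
      HasDerivAt (fun x => A * (x / 2 - B / x)) (A * (1 / 2 + B / s ^ 2)) s := by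
    intro s hs
    have h1 : HasDerivAt (fun x : ℝ => x / 2 - B * x⁻¹) (1 / 2 + B / s ^ 2) s := by
      have := ((hasDerivAt_id s).div_const 2).sub ((hasDerivAt_inv hs).const_mul B)
      refine this.congr_deriv ?_
      ring
    exact h1.const_mul A
  set g : ℝ → ℝ := fun s =>
    A * (1 / 2 + B / s ^ 2) * (n - 2) * (A * (s / 2 - B / s)) ^ (n - 3) with hg
  have hder : ∀ s : ℝ, s ≠ 0 → 0 < A * (s / 2 - B / s) →
      HasDerivAt (fun x => u t x) (g s) s := by
    intro s hs hps
    have h := (hV s hs).rpow_const (p := n - 2) (Or.inl hps.ne')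
    have he : n - 2 - 1 = n - 3 := by ring
    rw [he] at h
    simp only [hu, ← hB]
    exact h
  -- eventual equality of derivatives
  have hVcont : ContinuousAt (fun s : ℝ => A * (s / 2 - B / s)) r := by
    have : ContinuousAt (fun s : ℝ => s / 2 - B / s) r :=
      (continuousAt_id.div_const 2).sub (continuousAt_const.div continuousAt_id hr')
    exact continuousAt_const.mul this
  have hmem : ∀ᶠ s in nhds r, s ≠ 0 ∧ 0 < A * (s / 2 - B / s) := by
    filter_upwards [eventually_gt_nhds hr, hVcont.eventually (eventually_gt_nhds hv0)] with s h1 h2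
    exact ⟨h1.ne', h2⟩
  have hev : deriv (fun s => u t s) =ᶠ[nhds r] g := by
    filter_upwards [hmem] with s hs
    exact (hder s hs.1 hs.2).deriv
  -- second spatial derivative
  have hW : HasDerivAt (fun s : ℝ => A * (1 / 2 + B / s ^ 2) * (n - 2))
      (A * (B * (-(2 * r) / (r ^ 2) ^ 2)) * (n - 2)) r := by
    have hinv : HasDerivAt (fun x : ℝ => (x ^ 2)⁻¹) (-(2 * r) / (r ^ 2) ^ 2) r := by
      have := (hasDerivAt_pow 2 r).fun_inv (pow_ne_zero 2 hr')
      refine this.congr_deriv ?_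
      norm_num
    have h1 := (((hinv.const_mul B).const_add (1 / 2)).const_mul A).mul_const (n - 2)
    have hfun : (fun s : ℝ => A * (1 / 2 + B / s ^ 2) * (n - 2))
        = fun s : ℝ => A * (1 / 2 + B * (s ^ 2)⁻¹) * (n - 2) := by
      funext x; rw [div_eq_mul_inv B]
    rw [hfun]
    exact h1
  have hV3 : HasDerivAt (fun s : ℝ => (A * (s / 2 - B / s)) ^ (n - 3))
      (A * (1 / 2 + B / r ^ 2) * (n - 3) * v ^ (n - 4)) r := by
    have h := (hV r hr').rpow_const (p := n - 3) (Or.inl hv0.ne')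
    have he : n - 3 - 1 = n - 4 := by ring
    rw [he] at h
    exact h
  have hgd : HasDerivAt g
      (A * (B * (-(2 * r) / (r ^ 2) ^ 2)) * (n - 2) * v ^ (n - 3)
        + A * (1 / 2 + B / r ^ 2) * (n - 2) * (A * (1 / 2 + B / r ^ 2) * (n - 3) * v ^ (n - 4)))
      r := by
    have := hW.fun_mul hV3
    simpa [hg, ← hv] using this
  -- assemble
  rw [hut.deriv, hev.deriv_eq, hgd.deriv, (hder r hr' hv0).deriv, hu t r]
  have hgr : g r = A * (1 / 2 + B / r ^ 2) * (n - 2) * v ^ (n - 3) := by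
    simp only [hg, ← hv]
  rw [hgr]
  -- reaction term
  have hreact : (v ^ (n - 2)) ^ (q + 1) = v ^ (n - 4) := by
    rw [← Real.rpow_mul hv0.le]
    congr 1
    rw [hq]; field_simp; ring
  rw [hreact]
  have e1 : v ^ (n - 3) = v ^ (n - 4) * v := by
    rw [show n - 3 = n - 4 + 1 by ring, Real.rpow_add_one hv0.ne']
  rw [e1]
  generalize v ^ (n - 4) = P
  rw [hkval, hv]
  field_simp
  ring
end

section
/- Let p, q, k, c be real constants with p > 0, k > 0, q + 2 > 0, q ≠ 0, q ≠ −1, let n = 1, and let ε ∈ {1, −1}. Set β := (p/(2(q+2)))^{1/2} and define u(t,r) := (−(k/p)^{1/2} + exp(−ε q β (r + ε (q+4) β (t+c))))^{−2/q}, where the real power with exponent −2/q is taken. Then at every point (t,r) where −(k/p)^{1/2} + exp(−ε q β (r + ε (q+4) β (t+c))) > 0, the function u is positive and satisfies u_t = u_rr + (p − k u^q) u. -/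
set_option maxHeartbeats 1600000 in
/-- Explicit travelling-wave solution of the reaction-diffusion equation with `n = 1`,
`q ≠ -2` (the branch with `-(k/p)^{1/2}` in the base). -/
theorem travelling_wave_solution_minus
    (p q k c ε : ℝ)
    (hp : 0 < p) (hk : 0 < k) (hq2 : 0 < q + 2) (hq : q ≠ 0) (hq1 : q ≠ -1)
    (hε : ε = 1 ∨ ε = -1)
    (β : ℝ) (hβ : β = Real.sqrt (p / (2 * (q + 2))))
    (u : ℝ → ℝ → ℝ)
    (hu : ∀ t r : ℝ, u t r =
      (-Real.sqrt (k / p)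
        + Real.exp (-(ε * q * β) * (r + ε * (q + 4) * β * (t + c)))) ^ (-2 / q)) :
    ∀ t r : ℝ,
      0 < -Real.sqrt (k / p)
        + Real.exp (-(ε * q * β) * (r + ε * (q + 4) * β * (t + c))) →
      0 < u t r ∧
      deriv (fun s => u s r) t =
        deriv (deriv (fun s => u t s)) r + (p - k * u t r ^ q) * u t r := by
  intro t r hw
  set A := Real.sqrt (k / p) with hA
  set a := -(ε * q * β) with ha
  set b := ε * (q + 4) * β with hb
  set m := -2 / q with hm
  have hβ2 : 2 * (q + 2) * β ^ 2 = p := by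
    rw [hβ, Real.sq_sqrt (by positivity)]
    field_simp
  have hA2 : p * A ^ 2 = k := by
    rw [hA, Real.sq_sqrt (by positivity)]
    field_simp
  have hEx : ∀ s : ℝ, HasDerivAt (fun x : ℝ => Real.exp (a * (x + b * (t + c))))
      (a * Real.exp (a * (s + b * (t + c)))) s := by
    intro s
    have h1 : HasDerivAt (fun x : ℝ => a * (x + b * (t + c))) a s := by
      simpa using ((hasDerivAt_id s).add_const (b * (t + c))).const_mul a
    simpa [mul_comm] using h1.exp
  have hF : ∀ s : ℝ, HasDerivAt (fun x : ℝ => -A + Real.exp (a * (x + b * (t + c))))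
      (a * Real.exp (a * (s + b * (t + c)))) s := fun s => (hEx s).const_add (-A)
  have hupos : 0 < u t r := by
    rw [hu t r]; exact Real.rpow_pos_of_pos hw _
  refine ⟨hupos, ?_⟩
  have hut : (fun s => u t s) = fun s => (-A + Real.exp (a * (s + b * (t + c)))) ^ m := by
    funext s; rw [hu t s]
  have hcont : Continuous fun s : ℝ => -A + Real.exp (a * (s + b * (t + c))) := by
    continuity
  have hev : ∀ᶠ s in nhds r, 0 < -A + Real.exp (a * (s + b * (t + c))) :=
    (hcont.tendsto r).eventually (eventually_gt_nhds hw)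
  have hd1 : deriv (fun s => u t s) =ᶠ[nhds r]
      fun s => m * (-A + Real.exp (a * (s + b * (t + c)))) ^ (m - 1)
        * (a * Real.exp (a * (s + b * (t + c)))) := by
    rw [hut]
    filter_upwards [hev] with s hs
    exact ((Real.hasDerivAt_rpow_const (p := m) (Or.inl hs.ne')).comp s (hF s)).deriv
  rw [hd1.deriv_eq]
  have h2 : HasDerivAt (fun s => (-A + Real.exp (a * (s + b * (t + c)))) ^ (m - 1))
      ((m - 1) * (-A + Real.exp (a * (r + b * (t + c)))) ^ (m - 1 - 1)
        * (a * Real.exp (a * (r + b * (t + c))))) r :=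
    by have h := (Real.hasDerivAt_rpow_const (p := m - 1) (Or.inl hw.ne')).comp r (hF r); exact h
  have h3 := (h2.mul (hEx r)).const_mul (m * a)
  have hgeq : (fun s => m * (-A + Real.exp (a * (s + b * (t + c)))) ^ (m - 1)
        * (a * Real.exp (a * (s + b * (t + c)))))
      = fun s => (m * a) * ((-A + Real.exp (a * (s + b * (t + c)))) ^ (m - 1)
        * Real.exp (a * (s + b * (t + c)))) := by
    funext s; ring
  rw [hgeq, (show HasDerivAt (fun s => (m * a) * ((-A + Real.exp (a * (s + b * (t + c)))) ^ (m - 1)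
        * Real.exp (a * (s + b * (t + c))))) _ r from h3).deriv]
  have hts : (fun s => u s r) = fun s => (-A + Real.exp (a * (r + b * (s + c)))) ^ m := by
    funext s; rw [hu s r]
  have hin : HasDerivAt (fun s : ℝ => a * (r + b * (s + c))) (a * b) t := by
    simpa using ((((hasDerivAt_id t).add_const c).const_mul b).const_add r).const_mul a
  have hWt : HasDerivAt (fun s => (-A + Real.exp (a * (r + b * (s + c)))) ^ m)
      (m * (-A + Real.exp (a * (r + b * (t + c)))) ^ (m - 1)
        * (Real.exp (a * (r + b * (t + c))) * (a * b))) t :=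
    by have h := (Real.hasDerivAt_rpow_const (p := m) (Or.inl hw.ne')).comp t ((hin.exp).const_add (-A)); exact h
  rw [hts, hWt.deriv, hu t r]
  set X := Real.exp (a * (r + b * (t + c))) with hX
  have hmq : m * q = -2 := by rw [hm]; field_simp
  have e1 : (-A + X) ^ (m - 1) = (-A + X) ^ m / (-A + X) := by
    rw [Real.rpow_sub hw, Real.rpow_one]
  have e2 : (-A + X) ^ (m - 1 - 1) = (-A + X) ^ m / (-A + X) ^ 2 := by
    rw [show m - 1 - 1 = m - 2 by ring, Real.rpow_sub hw,
      show (2 : ℝ) = ((2 : ℕ) : ℝ) by norm_num, Real.rpow_natCast]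
  have e3 : ((-A + X) ^ m) ^ q = ((-A + X) ^ 2)⁻¹ := by
    rw [← Real.rpow_mul hw.le, hmq,
      show (-2 : ℝ) = -((2 : ℕ) : ℝ) by norm_num, Real.rpow_neg hw.le, Real.rpow_natCast]
  rw [e1, e2, e3, ← hA2, ← hβ2, hm, ha, hb]
  have hWne : -A + X ≠ 0 := hw.ne'
  rcases hε with rfl | rfl <;>
  · field_simp
    ring
end

section
/- Let p, q, k, c be real constants with p > 0, k > 0, q + 2 > 0, q ≠ 0, q ≠ −1, let n = 1, and let ε ∈ {1, −1}. Set β := (p/(2(q+2)))^{1/2} and define u(t,r) := ((k/p)^{1/2} + exp(−ε q β (r + ε (q+4) β (t+c))))^{−2/q}, where the real power with exponent −2/q is taken. Then u is positive and satisfies u_t = u_rr + (p − k u^q) u at every point (t,r) ∈ ℝ × ℝ. -/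
/-- Explicit travelling-wave solution of the reaction-diffusion equation with `n = 1`,
`q ≠ -2` (the branch with `+(k/p)^{1/2}` in the base), valid on all of `ℝ × ℝ`. -/
theorem travelling_wave_solution_plus
    (p q k c ε : ℝ)
    (hp : 0 < p) (hk : 0 < k) (hq2 : 0 < q + 2) (hq : q ≠ 0) (hq1 : q ≠ -1)
    (hε : ε = 1 ∨ ε = -1)
    (β : ℝ) (hβ : β = Real.sqrt (p / (2 * (q + 2))))
    (u : ℝ → ℝ → ℝ)
    (hu : ∀ t r : ℝ, u t r =
      (Real.sqrt (k / p)
        + Real.exp (-(ε * q * β) * (r + ε * (q + 4) * β * (t + c)))) ^ (-2 / q)) :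
    ∀ t r : ℝ,
      0 < u t r ∧
      deriv (fun s => u s r) t =
        deriv (deriv (fun s => u t s)) r + (p - k * u t r ^ q) * u t r := by
  have hkp : (0:ℝ) < k / p := div_pos hk hp
  have hε2 : ε ^ 2 = 1 := by rcases hε with rfl | rfl <;> norm_num
  set A := Real.sqrt (k / p) with hAdef
  have hA : 0 < A := Real.sqrt_pos.mpr hkp
  have hA2 : p * A ^ 2 = k := by
    rw [hAdef, Real.sq_sqrt hkp.le]; field_simp
  have hq2' : (0:ℝ) < 2 * (q + 2) := by linarith
  have hβ2 : 2 * (q + 2) * β ^ 2 = p := by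
    rw [hβ, Real.sq_sqrt (le_of_lt (div_pos hp hq2'))]; field_simp
  set m := -2 / q with hm
  have hqm : q * m = -2 := by rw [hm]; field_simp
  set a := -(ε * q * β) with ha
  set b := ε * (q + 4) * β with hb
  set E : ℝ → ℝ → ℝ := fun t r => Real.exp (a * (r + b * (t + c))) with hE
  have hEpos : ∀ t r, 0 < E t r := fun t r => Real.exp_pos _
  have hS : ∀ t r, 0 < A + E t r := fun t r => add_pos hA (hEpos t r)
  have hu' : ∀ t r, u t r = (A + E t r) ^ m := by
    intro t r
    rw [hu t r, hE]
  intro t r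
  refine ⟨by rw [hu']; exact Real.rpow_pos_of_pos (hS t r) m, ?_⟩
  -- exp derivative in t
  have l2 : ∀ t₀, HasDerivAt (fun s : ℝ => E s r) (E t₀ r * (a * b)) t₀ := by
    intro t₀
    have l1 : HasDerivAt (fun s : ℝ => a * (r + b * (s + c))) (a * b) t₀ := by
      simpa using ((((hasDerivAt_id t₀).add_const c).const_mul b).const_add r).const_mul a
    simpa [hE] using l1.exp
  -- time derivative
  have hdt : deriv (fun s => u s r) t = E t r * (a * b) * m * (A + E t r) ^ (m - 1) := by
    have : (fun s => u s r) = fun s => (A + E s r) ^ m := funext fun s => hu' s r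
    rw [this]
    exact (((l2 t).const_add A).rpow_const (Or.inl (hS t r).ne')).deriv
  -- exp derivative in r
  have l2' : ∀ r₀, HasDerivAt (fun s : ℝ => E t s) (E t r₀ * a) r₀ := by
    intro r₀
    have l1 : HasDerivAt (fun s : ℝ => a * (s + b * (t + c))) a r₀ := by
      simpa using ((hasDerivAt_id r₀).add_const (b * (t + c))).const_mul a
    simpa [hE] using l1.exp
  -- first spatial derivative as a function
  have hd1 : deriv (fun s => u t s) = fun s => E t s * a * m * (A + E t s) ^ (m - 1) := by
    funext s
    have h : (fun s => u t s) = fun s => (A + E t s) ^ m := funext fun s => hu' t s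
    rw [h]
    exact (((l2' s).const_add A).rpow_const (Or.inl (hS t s).ne')).deriv
  -- second spatial derivative
  have hdrr : deriv (deriv (fun s => u t s)) r =
      E t r * a * a * m * (A + E t r) ^ (m - 1)
      + E t r * a * m * (E t r * a * (m - 1) * (A + E t r) ^ (m - 1 - 1)) := by
    rw [hd1]
    have h1 : HasDerivAt (fun s => E t s * a * m) (E t r * a * a * m) r := by
      simpa [mul_comm, mul_assoc, mul_left_comm] using ((l2' r).mul_const a).mul_const m
    have h2 : HasDerivAt (fun s => (A + E t s) ^ (m - 1))
        (E t r * a * (m - 1) * (A + E t r) ^ (m - 1 - 1)) r :=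
      ((l2' r).const_add A).rpow_const (Or.inl (hS t r).ne')
    have h3 := (h1.mul h2).deriv
    exact h3
  rw [hdt, hdrr]
  -- algebraic identities
  have hSpos : 0 < A + E t r := hS t r
  set P := (A + E t r) ^ (m - 1 - 1) with hP
  have e1 : (A + E t r) ^ (m - 1) = P * (A + E t r) := by
    rw [hP, ← Real.rpow_add_one hSpos.ne' (m - 1 - 1)]
    ring_nf
  have e2 : u t r = P * (A + E t r) * (A + E t r) := by
    rw [hu' t r, ← e1, ← Real.rpow_add_one hSpos.ne' (m - 1)]
    ring_nf
  have e3 : u t r ^ q * u t r = P := by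
    rw [hu' t r, ← Real.rpow_mul hSpos.le, ← Real.rpow_add hSpos, hP]
    congr 1
    linear_combination hqm
  have e4 : (p - k * u t r ^ q) * u t r = p * (P * (A + E t r) * (A + E t r)) - k * P := by
    rw [sub_mul, mul_assoc, e3, e2]
  rw [e1, e4, ha, hb]
  clear_value P m
  linear_combination
    (P * (-(m*q*(q+4)*β^2*(E t r)*(A + E t r)) - m*q^2*β^2*(E t r)*(A + E t r)
      - m*(m-1)*q^2*β^2*(E t r)^2)) * hε2
    + (P * (-((q+4)*β^2*(E t r)*(A + E t r)) - (q*m - q - 2)*β^2*(E t r)^2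
      - q*β^2*(E t r)*(A + E t r))) * hqm
    + (P * (2*(E t r)*(A + E t r) - (E t r)^2)) * hβ2
    - P * hA2
end

section
/- Let p, k, c, c₁ be real constants with p > 0 and k > 0, let n = 1 and q = 2, and let ε ∈ {1, −1}. Define u(t,r) := cosh((p/2)^{1/2}(r + c₁)) / ((k/p)^{1/2} sinh((p/2)^{1/2}(r + c₁)) + ε exp(−3p(t+c)/2)). Then at every point (t,r) ∈ ℝ × ℝ where the denominator (k/p)^{1/2} sinh((p/2)^{1/2}(r + c₁)) + ε exp(−3p(t+c)/2) is nonzero, the function u satisfies u_t = u_rr + (p − k u²) u. -/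
lemma hlin (A c₁ x : ℝ) : HasDerivAt (fun y : ℝ => A * (y + c₁)) A x := by
  simpa using ((hasDerivAt_id x).add_const c₁).const_mul A

lemma hcosh (A c₁ x : ℝ) :
    HasDerivAt (fun y : ℝ => Real.cosh (A * (y + c₁))) (Real.sinh (A * (x + c₁)) * A) x :=
  (Real.hasDerivAt_cosh _).comp x (hlin A c₁ x)

lemma hsinh (A c₁ x : ℝ) :
    HasDerivAt (fun y : ℝ => Real.sinh (A * (y + c₁))) (Real.cosh (A * (x + c₁)) * A) x :=
  (Real.hasDerivAt_sinh _).comp x (hlin A c₁ x)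

lemma hden (A B e c₁ x : ℝ) :
    HasDerivAt (fun y : ℝ => B * Real.sinh (A * (y + c₁)) + e)
      (B * (Real.cosh (A * (x + c₁)) * A)) x :=
  ((hsinh A c₁ x).const_mul B).add_const e

lemma hderiv_u (A B e c₁ x : ℝ) (hx : B * Real.sinh (A * (x + c₁)) + e ≠ 0) :
    HasDerivAt (fun y => Real.cosh (A * (y + c₁)) / (B * Real.sinh (A * (y + c₁)) + e))
      ((Real.sinh (A * (x + c₁)) * A * (B * Real.sinh (A * (x + c₁)) + e)
        - Real.cosh (A * (x + c₁)) * (B * (Real.cosh (A * (x + c₁)) * A)))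
        / (B * Real.sinh (A * (x + c₁)) + e) ^ 2) x :=
  (hcosh A c₁ x).div (hden A B e c₁ x) hx

lemma hderiv_g (A B e c₁ x : ℝ) (hx : B * Real.sinh (A * (x + c₁)) + e ≠ 0) :
    HasDerivAt (fun y => (Real.sinh (A * (y + c₁)) * A * (B * Real.sinh (A * (y + c₁)) + e)
        - Real.cosh (A * (y + c₁)) * (B * (Real.cosh (A * (y + c₁)) * A)))
        / (B * Real.sinh (A * (y + c₁)) + e) ^ 2)
      (((Real.cosh (A * (x + c₁)) * A * A * (B * Real.sinh (A * (x + c₁)) + e)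
          + Real.sinh (A * (x + c₁)) * A * (B * (Real.cosh (A * (x + c₁)) * A))
          - (Real.sinh (A * (x + c₁)) * A * (B * (Real.cosh (A * (x + c₁)) * A))
            + Real.cosh (A * (x + c₁)) * (B * (Real.sinh (A * (x + c₁)) * A * A))))
          * (B * Real.sinh (A * (x + c₁)) + e) ^ 2
        - (Real.sinh (A * (x + c₁)) * A * (B * Real.sinh (A * (x + c₁)) + e)
            - Real.cosh (A * (x + c₁)) * (B * (Real.cosh (A * (x + c₁)) * A)))
          * ((2 : ℕ) * (B * Real.sinh (A * (x + c₁)) + e) ^ 1 * (B * (Real.cosh (A * (x + c₁)) * A))))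
        / ((B * Real.sinh (A * (x + c₁)) + e) ^ 2) ^ 2) x := by
  have h1 : HasDerivAt (fun y => Real.sinh (A * (y + c₁)) * A)
      (Real.cosh (A * (x + c₁)) * A * A) x := (hsinh A c₁ x).mul_const A
  have h2 := h1.mul (hden A B e c₁ x)
  have hin : HasDerivAt (fun y => B * (Real.cosh (A * (y + c₁)) * A))
      (B * (Real.sinh (A * (x + c₁)) * A * A)) x := by
    simpa [mul_assoc] using (((hcosh A c₁ x).mul_const A).const_mul B)
  have h3 := (hcosh A c₁ x).mul hin
  have hNum := h2.sub h3
  have hDen2 := (hden A B e c₁ x).pow 2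
  exact hNum.div hDen2 (pow_ne_zero 2 hx)

/-- Explicit non-invariant solution (cosh/sinh) of the reaction-diffusion equation with
`n = 1`, `q = 2`, `p > 0`. -/
theorem noninvariant_solution_cosh
    (p k c c₁ ε : ℝ) (hp : 0 < p) (hk : 0 < k) (hε : ε = 1 ∨ ε = -1)
    (u : ℝ → ℝ → ℝ)
    (hu : ∀ t r : ℝ, u t r =
      Real.cosh (Real.sqrt (p / 2) * (r + c₁)) /
        (Real.sqrt (k / p) * Real.sinh (Real.sqrt (p / 2) * (r + c₁))
          + ε * Real.exp (-(3 * p * (t + c)) / 2))) :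
    ∀ t r : ℝ,
      Real.sqrt (k / p) * Real.sinh (Real.sqrt (p / 2) * (r + c₁))
        + ε * Real.exp (-(3 * p * (t + c)) / 2) ≠ 0 →
      deriv (fun s => u s r) t =
        deriv (deriv (fun s => u t s)) r + (p - k * u t r ^ 2) * u t r := by
  intro t r hD
  set A := Real.sqrt (p / 2) with hAdef
  set B := Real.sqrt (k / p) with hBdef
  have hA2 : A ^ 2 = p / 2 := Real.sq_sqrt (by positivity)
  have hB2 : B ^ 2 = k / p := Real.sq_sqrt (by positivity)
  -- time derivative
  have hfun_t : (fun s => u s r) = fun s => Real.cosh (A * (r + c₁)) /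
      (B * Real.sinh (A * (r + c₁)) + ε * Real.exp (-(3 * p * (s + c)) / 2)) :=
    funext fun s => hu s r
  have hlin_t : HasDerivAt (fun s : ℝ => -(3 * p * (s + c)) / 2) (-(3 * p) / 2) t := by
    simpa using ((((hasDerivAt_id t).add_const c).const_mul (3 * p)).neg).div_const 2
  have hE : HasDerivAt (fun s : ℝ => ε * Real.exp (-(3 * p * (s + c)) / 2))
      (ε * (Real.exp (-(3 * p * (t + c)) / 2) * (-(3 * p) / 2))) t :=
    ((Real.hasDerivAt_exp _).comp t hlin_t).const_mul ε
  have hDt : HasDerivAt (fun s : ℝ => B * Real.sinh (A * (r + c₁))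
        + ε * Real.exp (-(3 * p * (s + c)) / 2))
      (ε * (Real.exp (-(3 * p * (t + c)) / 2) * (-(3 * p) / 2))) t :=
    hE.const_add (B * Real.sinh (A * (r + c₁)))
  have hut : HasDerivAt (fun s => u s r)
      ((0 * (B * Real.sinh (A * (r + c₁)) + ε * Real.exp (-(3 * p * (t + c)) / 2))
        - Real.cosh (A * (r + c₁)) * (ε * (Real.exp (-(3 * p * (t + c)) / 2) * (-(3 * p) / 2))))
        / (B * Real.sinh (A * (r + c₁)) + ε * Real.exp (-(3 * p * (t + c)) / 2)) ^ 2) t := by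
    rw [hfun_t]
    exact (hasDerivAt_const t (Real.cosh (A * (r + c₁)))).div hDt hD
  -- space derivatives
  have hfun_r : (fun s => u t s) = fun y => Real.cosh (A * (y + c₁)) /
      (B * Real.sinh (A * (y + c₁)) + ε * Real.exp (-(3 * p * (t + c)) / 2)) :=
    funext fun s => hu t s
  have hcont : ContinuousAt (fun x : ℝ => B * Real.sinh (A * (x + c₁))
      + ε * Real.exp (-(3 * p * (t + c)) / 2)) r := by fun_prop
  have hev_ne : ∀ᶠ x in nhds r, B * Real.sinh (A * (x + c₁))
      + ε * Real.exp (-(3 * p * (t + c)) / 2) ≠ 0 := hcont.eventually_ne hD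
  have hev : deriv (fun s => u t s) =ᶠ[nhds r]
      fun x => (Real.sinh (A * (x + c₁)) * A
          * (B * Real.sinh (A * (x + c₁)) + ε * Real.exp (-(3 * p * (t + c)) / 2))
        - Real.cosh (A * (x + c₁)) * (B * (Real.cosh (A * (x + c₁)) * A)))
        / (B * Real.sinh (A * (x + c₁)) + ε * Real.exp (-(3 * p * (t + c)) / 2)) ^ 2 := by
    filter_upwards [hev_ne] with x hx
    rw [hfun_r]
    exact (hderiv_u A B _ c₁ x hx).deriv
  have hg := hderiv_g A B (ε * Real.exp (-(3 * p * (t + c)) / 2)) c₁ r hD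
  rw [hut.deriv, hev.deriv_eq, hg.deriv, hu t r]
  -- algebra
  have hp' : p = 2 * A ^ 2 := by rw [hA2]; ring
  have hk' : k = 2 * A ^ 2 * B ^ 2 := by rw [hA2, hB2]; field_simp
  set sh := Real.sinh (A * (r + c₁))
  set ch := Real.cosh (A * (r + c₁))
  set Ex := Real.exp (-(3 * p * (t + c)) / 2) with hExdef
  rw [hp', hk']
  field_simp
  ring
end

section
/- Let p, k, c, c₁ be real constants with p > 0 and k > 0, let n = 1 and q = 2, and let ε ∈ {1, −1}. Define u(t,r) := sinh((p/2)^{1/2}(r + c₁)) / ((k/p)^{1/2} cosh((p/2)^{1/2}(r + c₁)) + ε exp(−3p(t+c)/2)). Then at every point (t,r) ∈ ℝ × ℝ where the denominator (k/p)^{1/2} cosh((p/2)^{1/2}(r + c₁)) + ε exp(−3p(t+c)/2) is nonzero, the function u satisfies u_t = u_rr + (p − k u²) u. -/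
/-- Explicit non-invariant solution (sinh/cosh) of the reaction-diffusion equation with
`n = 1`, `q = 2`, `p > 0`. -/
theorem noninvariant_solution_sinh
    (p k c c₁ ε : ℝ) (hp : 0 < p) (hk : 0 < k) (hε : ε = 1 ∨ ε = -1)
    (u : ℝ → ℝ → ℝ)
    (hu : ∀ t r : ℝ, u t r =
      Real.sinh (Real.sqrt (p / 2) * (r + c₁)) /
        (Real.sqrt (k / p) * Real.cosh (Real.sqrt (p / 2) * (r + c₁))
          + ε * Real.exp (-(3 * p * (t + c)) / 2))) :
    ∀ t r : ℝ,
      Real.sqrt (k / p) * Real.cosh (Real.sqrt (p / 2) * (r + c₁))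
        + ε * Real.exp (-(3 * p * (t + c)) / 2) ≠ 0 →
      deriv (fun s => u s r) t =
        deriv (deriv (fun s => u t s)) r + (p - k * u t r ^ 2) * u t r := by
  intro t r hD0
  set a := Real.sqrt (p / 2) with ha
  set b := Real.sqrt (k / p) with hb
  have ha2 : a ^ 2 = p / 2 := Real.sq_sqrt (by positivity)
  have hb2 : b ^ 2 = k / p := Real.sq_sqrt (by positivity)
  have hp2 : p = 2 * a ^ 2 := by rw [ha2]; ring
  have hkk : k = 2 * a ^ 2 * b ^ 2 := by rw [ha2, hb2]; field_simp
  set D : ℝ → ℝ → ℝ := fun t s =>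
    b * Real.cosh (a * (s + c₁)) + ε * Real.exp (-(3 * p * (t + c)) / 2) with hDdef
  -- basic derivatives
  have hx : ∀ s : ℝ, HasDerivAt (fun s : ℝ => a * (s + c₁)) a s := fun s => by
    simpa using ((hasDerivAt_id s).add_const c₁).const_mul a
  have hS : ∀ s : ℝ, HasDerivAt (fun s => Real.sinh (a * (s + c₁)))
      (a * Real.cosh (a * (s + c₁))) s := fun s => by
    simpa [mul_comm, Function.comp_def] using (Real.hasDerivAt_sinh (a * (s + c₁))).comp s (hx s)
  have hC : ∀ s : ℝ, HasDerivAt (fun s => Real.cosh (a * (s + c₁)))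
      (a * Real.sinh (a * (s + c₁))) s := fun s => by
    simpa [mul_comm, Function.comp_def] using (Real.hasDerivAt_cosh (a * (s + c₁))).comp s (hx s)
  have hE : ∀ s : ℝ, HasDerivAt (fun s : ℝ => Real.exp (-(3 * p * (s + c)) / 2))
      (-(3 * p) / 2 * Real.exp (-(3 * p * (s + c)) / 2)) s := fun s => by
    have h1 : HasDerivAt (fun s : ℝ => -(3 * p * (s + c)) / 2) (-(3 * p) / 2) s := by
      simpa using (((hasDerivAt_id s).add_const c).const_mul (3 * p)).neg.div_const 2
    simpa [mul_comm, Function.comp_def] using (Real.hasDerivAt_exp (-(3 * p * (s + c)) / 2)).comp s h1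
  have hDr : ∀ s : ℝ, HasDerivAt (fun s => D t s)
      (b * (a * Real.sinh (a * (s + c₁)))) s := fun s => by
    exact ((hC s).const_mul b).add_const (ε * Real.exp (-(3 * p * (t + c)) / 2))
  have hDt : HasDerivAt (fun s => D s r)
      (ε * (-(3 * p) / 2 * Real.exp (-(3 * p * (t + c)) / 2))) t := by
    exact ((hE t).const_mul ε).const_add (b * Real.cosh (a * (r + c₁)))
  -- time derivative of u
  have hut : HasDerivAt (fun s => u s r)
      ((0 * D t r - Real.sinh (a * (r + c₁)) *
        (ε * (-(3 * p) / 2 * Real.exp (-(3 * p * (t + c)) / 2)))) / (D t r) ^ 2) t := by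
    have h := (hasDerivAt_const t (Real.sinh (a * (r + c₁)))).div hDt hD0
    have hfun : (fun s => u s r) = fun s => Real.sinh (a * (r + c₁)) / D s r :=
      funext fun s => hu s r
    rw [hfun]; exact h
  -- first space derivative of u : eventually equal to g
  set g : ℝ → ℝ := fun s =>
    (a * Real.cosh (a * (s + c₁)) * D t s -
      Real.sinh (a * (s + c₁)) * (b * (a * Real.sinh (a * (s + c₁))))) / (D t s) ^ 2
    with hgdef
  have hDcont : ContinuousAt (fun s => D t s) r := by
    exact (hDr r).continuousAt
  have hne : ∀ᶠ s in nhds r, D t s ≠ 0 := hDcont.eventually_ne hD0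
  have hfun2 : (fun s => u t s) = fun s => Real.sinh (a * (s + c₁)) / D t s :=
    funext fun s => hu t s
  have hderiv_eq : deriv (fun s => u t s) =ᶠ[nhds r] g := by
    filter_upwards [hne] with s hs
    have h := (hS s).div (hDr s) hs
    rw [hfun2]
    exact h.deriv
  -- second space derivative
  have hnum : HasDerivAt (fun s =>
      a * Real.cosh (a * (s + c₁)) * D t s -
        Real.sinh (a * (s + c₁)) * (b * (a * Real.sinh (a * (s + c₁)))))
      (a * (a * Real.sinh (a * (r + c₁))) * D t r
        + a * Real.cosh (a * (r + c₁)) * (b * (a * Real.sinh (a * (r + c₁))))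
        - (a * Real.cosh (a * (r + c₁)) * (b * (a * Real.sinh (a * (r + c₁))))
          + Real.sinh (a * (r + c₁)) * (b * (a * (a * Real.cosh (a * (r + c₁))))))) r := by
    exact (((hC r).const_mul a).mul (hDr r)).sub
      ((hS r).mul (((hS r).const_mul a).const_mul b))
  have hden : HasDerivAt (fun s => (D t s) ^ 2)
      (2 * (D t r) ^ 1 * (b * (a * Real.sinh (a * (r + c₁))))) r := by
    simpa using (hDr r).fun_pow 2
  have hd2 : (D t r) ^ 2 ≠ 0 := pow_ne_zero 2 hD0
  have hg' : HasDerivAt g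
      (((a * (a * Real.sinh (a * (r + c₁))) * D t r
        + a * Real.cosh (a * (r + c₁)) * (b * (a * Real.sinh (a * (r + c₁))))
        - (a * Real.cosh (a * (r + c₁)) * (b * (a * Real.sinh (a * (r + c₁))))
          + Real.sinh (a * (r + c₁)) * (b * (a * (a * Real.cosh (a * (r + c₁))))))) * (D t r) ^ 2
        - (a * Real.cosh (a * (r + c₁)) * D t r -
            Real.sinh (a * (r + c₁)) * (b * (a * Real.sinh (a * (r + c₁)))))
          * (2 * (D t r) ^ 1 * (b * (a * Real.sinh (a * (r + c₁))))))
        / ((D t r) ^ 2) ^ 2) r := hnum.div hden hd2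
  rw [hut.deriv, hderiv_eq.deriv_eq, hg'.deriv, hu t r]
  have hDr0 : b * Real.cosh (a * (r + c₁)) + ε * Real.exp (-(3 * p * (t + c)) / 2) ≠ 0 := hD0
  show _ = _ + (p - k * (Real.sinh (a * (r + c₁)) / D t r) ^ 2) *
      (Real.sinh (a * (r + c₁)) / D t r)
  have hDval : D t r = b * Real.cosh (a * (r + c₁))
      + ε * Real.exp (-(3 * p * (t + c)) / 2) := rfl
  rw [hDval] at *
  rw [hp2] at hDr0 ⊢
  rw [hkk]
  set S := Real.sinh (a * (r + c₁))
  set C := Real.cosh (a * (r + c₁))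
  set E := Real.exp (-(3 * p * (t + c)) / 2)
  generalize Real.exp (-(3 * (2 * a ^ 2) * (t + c)) / 2) = E' at hDr0 ⊢
  field_simp
  ring
end

section
/- Let p, k, c, c₁ be real constants with p < 0 and k > 0, let n = 1 and q = 2, and let ε ∈ {1, −1}. Define u(t,r) := cos((−p/2)^{1/2}(r + c₁)) / ((−k/p)^{1/2} sin((−p/2)^{1/2}(r + c₁)) + ε exp(−3p(t+c)/2)). Then at every point (t,r) ∈ ℝ × ℝ where the denominator (−k/p)^{1/2} sin((−p/2)^{1/2}(r + c₁)) + ε exp(−3p(t+c)/2) is nonzero, the function u satisfies u_t = u_rr + (p − k u²) u. -/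
/-- Explicit non-invariant solution (cos/sin) of the reaction-diffusion equation with
`n = 1`, `q = 2`, `p < 0`. -/
theorem noninvariant_solution_cos
    (p k c c₁ ε : ℝ) (hp : p < 0) (hk : 0 < k) (hε : ε = 1 ∨ ε = -1)
    (u : ℝ → ℝ → ℝ)
    (hu : ∀ t r : ℝ, u t r =
      Real.cos (Real.sqrt (-p / 2) * (r + c₁)) /
        (Real.sqrt (-k / p) * Real.sin (Real.sqrt (-p / 2) * (r + c₁))
          + ε * Real.exp (-(3 * p * (t + c)) / 2))) :
    ∀ t r : ℝ,
      Real.sqrt (-k / p) * Real.sin (Real.sqrt (-p / 2) * (r + c₁))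
        + ε * Real.exp (-(3 * p * (t + c)) / 2) ≠ 0 →
      deriv (fun s => u s r) t =
        deriv (deriv (fun s => u t s)) r + (p - k * u t r ^ 2) * u t r := by
  intro t r hD
  set a := Real.sqrt (-p / 2) with ha
  set b := Real.sqrt (-k / p) with hb
  have hpne : p ≠ 0 := ne_of_lt hp
  have ha2 : a ^ 2 = -p / 2 := Real.sq_sqrt (by linarith)
  have hb2 : b ^ 2 = -k / p := Real.sq_sqrt (by
    rw [div_nonneg_iff]; right; constructor <;> linarith)
  have hpe : p = -2 * a ^ 2 := by rw [ha2]; ring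
  have hk2 : k = -p * b ^ 2 := by rw [hb2]; field_simp
  -- rewrite u by its formula
  have h1 : (fun s => u s r) = fun s =>
      Real.cos (a * (r + c₁)) /
        (b * Real.sin (a * (r + c₁)) + ε * Real.exp (-(3 * p * (s + c)) / 2)) :=
    funext fun s => hu s r
  have h2 : (fun s => u t s) = fun s =>
      Real.cos (a * (s + c₁)) /
        (b * Real.sin (a * (s + c₁)) + ε * Real.exp (-(3 * p * (t + c)) / 2)) :=
    funext fun s => hu t s
  rw [h1, h2, hu t r]
  -- time derivative
  have hl : HasDerivAt (fun s : ℝ => -(3 * p * (s + c)) / 2) (-(3 * p) / 2) t := by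
    simpa using (((hasDerivAt_id t).add_const c).const_mul (3 * p)).neg.div_const 2
  have hDt : HasDerivAt
      (fun s => b * Real.sin (a * (r + c₁)) + ε * Real.exp (-(3 * p * (s + c)) / 2))
      (ε * (Real.exp (-(3 * p * (t + c)) / 2) * (-(3 * p) / 2))) t :=
    (hl.exp.const_mul ε).const_add _
  have hut : HasDerivAt
      (fun s => Real.cos (a * (r + c₁)) /
        (b * Real.sin (a * (r + c₁)) + ε * Real.exp (-(3 * p * (s + c)) / 2))) _ t :=
    (hasDerivAt_const t (Real.cos (a * (r + c₁)))).div hDt hD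
  rw [hut.deriv]
  -- space derivative, at a generic point s where the denominator is nonzero
  have hDr : ∀ s : ℝ, HasDerivAt
      (fun x => b * Real.sin (a * (x + c₁)) + ε * Real.exp (-(3 * p * (t + c)) / 2))
      (b * (Real.cos (a * (s + c₁)) * a)) s := by
    intro s
    have hθ : HasDerivAt (fun x : ℝ => a * (x + c₁)) a s := by
      simpa using ((hasDerivAt_id s).add_const c₁).const_mul a
    exact (hθ.sin.const_mul b).add_const _
  have hcos : ∀ s : ℝ, HasDerivAt (fun x => Real.cos (a * (x + c₁)))
      (-Real.sin (a * (s + c₁)) * a) s := by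
    intro s
    have hθ : HasDerivAt (fun x : ℝ => a * (x + c₁)) a s := by
      simpa using ((hasDerivAt_id s).add_const c₁).const_mul a
    exact hθ.cos
  have hsin : ∀ s : ℝ, HasDerivAt (fun x => Real.sin (a * (x + c₁)))
      (Real.cos (a * (s + c₁)) * a) s := by
    intro s
    have hθ : HasDerivAt (fun x : ℝ => a * (x + c₁)) a s := by
      simpa using ((hasDerivAt_id s).add_const c₁).const_mul a
    exact hθ.sin
  have hF : ∀ s : ℝ,
      b * Real.sin (a * (s + c₁)) + ε * Real.exp (-(3 * p * (t + c)) / 2) ≠ 0 →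
      HasDerivAt (fun x => Real.cos (a * (x + c₁)) /
          (b * Real.sin (a * (x + c₁)) + ε * Real.exp (-(3 * p * (t + c)) / 2)))
        ((-Real.sin (a * (s + c₁)) * a *
            (b * Real.sin (a * (s + c₁)) + ε * Real.exp (-(3 * p * (t + c)) / 2)) -
          Real.cos (a * (s + c₁)) * (b * (Real.cos (a * (s + c₁)) * a))) /
          (b * Real.sin (a * (s + c₁)) + ε * Real.exp (-(3 * p * (t + c)) / 2)) ^ 2) s :=
    fun s hs => (hcos s).div (hDr s) hs
  have hcont : Continuous
      (fun s => b * Real.sin (a * (s + c₁)) + ε * Real.exp (-(3 * p * (t + c)) / 2)) := by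
    fun_prop
  have hopen : IsOpen {s : ℝ |
      b * Real.sin (a * (s + c₁)) + ε * Real.exp (-(3 * p * (t + c)) / 2) ≠ 0} :=
    isOpen_ne.preimage hcont
  have hev : deriv (fun x => Real.cos (a * (x + c₁)) /
      (b * Real.sin (a * (x + c₁)) + ε * Real.exp (-(3 * p * (t + c)) / 2))) =ᶠ[nhds r]
      (fun s => (-Real.sin (a * (s + c₁)) * a *
            (b * Real.sin (a * (s + c₁)) + ε * Real.exp (-(3 * p * (t + c)) / 2)) -
          Real.cos (a * (s + c₁)) * (b * (Real.cos (a * (s + c₁)) * a))) /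
          (b * Real.sin (a * (s + c₁)) + ε * Real.exp (-(3 * p * (t + c)) / 2)) ^ 2) :=
    Filter.eventuallyEq_of_mem (hopen.mem_nhds hD) (fun s hs => (hF s hs).deriv)
  rw [hev.deriv_eq]
  -- second space derivative
  have hN : HasDerivAt (fun s => -Real.sin (a * (s + c₁)) * a *
        (b * Real.sin (a * (s + c₁)) + ε * Real.exp (-(3 * p * (t + c)) / 2)) -
      Real.cos (a * (s + c₁)) * (b * (Real.cos (a * (s + c₁)) * a))) _ r :=
    (((hsin r).neg.mul_const a).mul (hDr r)).sub
      ((hcos r).mul (((hcos r).mul_const a).const_mul b))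
  have hDen : HasDerivAt (fun s =>
      (b * Real.sin (a * (s + c₁)) + ε * Real.exp (-(3 * p * (t + c)) / 2)) ^ 2) _ r :=
    (hDr r).pow 2
  have hG : HasDerivAt (fun s => (-Real.sin (a * (s + c₁)) * a *
            (b * Real.sin (a * (s + c₁)) + ε * Real.exp (-(3 * p * (t + c)) / 2)) -
          Real.cos (a * (s + c₁)) * (b * (Real.cos (a * (s + c₁)) * a))) /
          (b * Real.sin (a * (s + c₁)) + ε * Real.exp (-(3 * p * (t + c)) / 2)) ^ 2) _ r :=
    hN.div hDen (pow_ne_zero 2 hD)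
  rw [hG.deriv]
  simp only [Pi.neg_apply]
  -- algebra
  clear hut hG hN hDen hev hF hcont hopen hDr hDt hl h1 h2 hu
  set S := Real.sin (a * (r + c₁)) with hS
  set C := Real.cos (a * (r + c₁)) with hC
  set E := Real.exp (-(3 * p * (t + c)) / 2) with hE
  set D := b * S + ε * E with hDd
  rcases hε with rfl | rfl
  · have hEe : E = D - b * S := by rw [hDd]; ring
    rw [hk2, hpe, hEe]
    field_simp [hD]
    ring
  · have hEe : E = -(D - b * S) := by rw [hDd]; ring
    rw [hk2, hpe, hEe]
    field_simp [hD]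
    ring
end

section
/- Let p, k, c, c₁ be real constants with p < 0 and k > 0, let n = 1 and q = 2, and let ε ∈ {1, −1}. Define u(t,r) := sin((−p/2)^{1/2}(r + c₁)) / ((−k/p)^{1/2} cos((−p/2)^{1/2}(r + c₁)) − ε exp(−3p(t+c)/2)). Then at every point (t,r) ∈ ℝ × ℝ where the denominator (−k/p)^{1/2} cos((−p/2)^{1/2}(r + c₁)) − ε exp(−3p(t+c)/2) is nonzero, the function u satisfies u_t = u_rr + (p − k u²) u. -/
/-- Explicit non-invariant solution (sin/cos) of the reaction-diffusion equation with
`n = 1`, `q = 2`, `p < 0`. -/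
theorem noninvariant_solution_sin
    (p k c c₁ ε : ℝ) (hp : p < 0) (hk : 0 < k) (hε : ε = 1 ∨ ε = -1)
    (u : ℝ → ℝ → ℝ)
    (hu : ∀ t r : ℝ, u t r =
      Real.sin (Real.sqrt (-p / 2) * (r + c₁)) /
        (Real.sqrt (-k / p) * Real.cos (Real.sqrt (-p / 2) * (r + c₁))
          - ε * Real.exp (-(3 * p * (t + c)) / 2))) :
    ∀ t r : ℝ,
      Real.sqrt (-k / p) * Real.cos (Real.sqrt (-p / 2) * (r + c₁))
        - ε * Real.exp (-(3 * p * (t + c)) / 2) ≠ 0 →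
      deriv (fun s => u s r) t =
        deriv (deriv (fun s => u t s)) r + (p - k * u t r ^ 2) * u t r := by
  intro t r hD0
  set A : ℝ := Real.sqrt (-p / 2) with hAdef
  set B : ℝ := Real.sqrt (-k / p) with hBdef
  have hA2 : A ^ 2 = -p / 2 := Real.sq_sqrt (by linarith)
  have hkp : (0:ℝ) < -k / p := div_pos_of_neg_of_neg (by linarith) hp
  have hB2 : B ^ 2 = -k / p := Real.sq_sqrt hkp.le
  -- time derivative
  have hf : HasDerivAt (fun s : ℝ => -(3 * p * (s + c)) / 2) (-(3 * p) / 2) t := by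
    have h0 : (fun s : ℝ => -(3 * p * (s + c)) / 2)
        = fun s => (-(3 * p) / 2) * s + (-(3 * p * c) / 2) := by funext s; ring
    rw [h0]
    simpa using ((hasDerivAt_id t).const_mul (-(3 * p) / 2)).add_const (-(3 * p * c) / 2)
  have hden_t : HasDerivAt
      (fun s : ℝ => B * Real.cos (A * (r + c₁)) - ε * Real.exp (-(3 * p * (s + c)) / 2))
      (0 - ε * (Real.exp (-(3 * p * (t + c)) / 2) * (-(3 * p) / 2))) t :=
    (hasDerivAt_const t _).sub (hf.exp.const_mul ε)
  have hut : HasDerivAt (fun s => u s r)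
      ((0 * (B * Real.cos (A * (r + c₁)) - ε * Real.exp (-(3 * p * (t + c)) / 2))
        - Real.sin (A * (r + c₁)) *
          (0 - ε * (Real.exp (-(3 * p * (t + c)) / 2) * (-(3 * p) / 2))))
        / (B * Real.cos (A * (r + c₁)) - ε * Real.exp (-(3 * p * (t + c)) / 2)) ^ 2) t := by
    have h1 : (fun s => u s r) = fun s =>
        Real.sin (A * (r + c₁)) /
          (B * Real.cos (A * (r + c₁)) - ε * Real.exp (-(3 * p * (s + c)) / 2)) := by
      funext s; exact hu s r
    rw [h1]
    exact (hasDerivAt_const t _).div hden_t hD0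
  set E : ℝ := Real.exp (-(3 * p * (t + c)) / 2) with hEdef
  -- spatial derivatives
  have hin : ∀ x : ℝ, HasDerivAt (fun y : ℝ => A * (y + c₁)) A x := by
    intro x
    simpa using ((hasDerivAt_id x).add_const c₁).const_mul A
  have hv : ∀ x : ℝ, (B * Real.cos (A * (x + c₁)) - ε * E) ≠ 0 →
      HasDerivAt (fun y => u t y)
        ((Real.cos (A * (x + c₁)) * A * (B * Real.cos (A * (x + c₁)) - ε * E)
          - Real.sin (A * (x + c₁)) * (B * (-Real.sin (A * (x + c₁)) * A)))
          / (B * Real.cos (A * (x + c₁)) - ε * E) ^ 2) x := by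
    intro x hx
    have h1 : (fun y => u t y) = fun y =>
        Real.sin (A * (y + c₁)) / (B * Real.cos (A * (y + c₁)) - ε * E) := by
      funext y; rw [hu t y, hEdef]
    rw [h1]
    exact (hin x).sin.div (((hin x).cos.const_mul B).sub_const (ε * E)) hx
  have hcont : Continuous fun x : ℝ => B * Real.cos (A * (x + c₁)) - ε * E :=
    (continuous_const.mul (Real.continuous_cos.comp
      (continuous_const.mul (continuous_id.add continuous_const)))).sub continuous_const
  have hU : IsOpen {x : ℝ | B * Real.cos (A * (x + c₁)) - ε * E ≠ 0} :=
    isOpen_ne.preimage hcont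
  have hr : r ∈ {x : ℝ | B * Real.cos (A * (x + c₁)) - ε * E ≠ 0} := hD0
  have hev : (deriv fun s => u t s) =ᶠ[nhds r] (fun x =>
      (Real.cos (A * (x + c₁)) * A * (B * Real.cos (A * (x + c₁)) - ε * E)
        - Real.sin (A * (x + c₁)) * (B * (-Real.sin (A * (x + c₁)) * A)))
        / (B * Real.cos (A * (x + c₁)) - ε * E) ^ 2) :=
    Filter.eventuallyEq_of_mem (hU.mem_nhds hr) (fun x hx => (hv x hx).deriv)
  -- second spatial derivative
  have hden : HasDerivAt (fun x : ℝ => B * Real.cos (A * (x + c₁)) - ε * E)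
      (B * (-Real.sin (A * (r + c₁)) * A)) r :=
    ((hin r).cos.const_mul B).sub_const (ε * E)
  have h1 : HasDerivAt (fun x : ℝ => Real.cos (A * (x + c₁)) * A)
      (-Real.sin (A * (r + c₁)) * A * A) r := (hin r).cos.mul_const A
  have h3 : HasDerivAt (fun x : ℝ => B * (-Real.sin (A * (x + c₁)) * A))
      (B * (-(Real.cos (A * (r + c₁)) * A) * A)) r :=
    ((hin r).sin.neg.mul_const A).const_mul B
  have hN := (h1.mul hden).sub ((hin r).sin.mul h3)
  have hD2 := hden.pow 2
  have hg : HasDerivAt (fun x =>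
      (Real.cos (A * (x + c₁)) * A * (B * Real.cos (A * (x + c₁)) - ε * E)
        - Real.sin (A * (x + c₁)) * (B * (-Real.sin (A * (x + c₁)) * A)))
        / (B * Real.cos (A * (x + c₁)) - ε * E) ^ 2) _ r := hN.div hD2 (pow_ne_zero 2 hD0)
  simp only [Pi.pow_apply, Pi.mul_apply, Pi.sub_apply] at hg
  rw [hev.deriv_eq, hg.deriv, hut.deriv, hu t r, ← hEdef]
  -- now pure algebra
  set S : ℝ := Real.sin (A * (r + c₁)) with hSdef
  set C : ℝ := Real.cos (A * (r + c₁)) with hCdef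
  clear_value S C E A B
  have hpA : p = -(2 * A ^ 2) := by linarith [hA2]
  have hpB : p * B ^ 2 = -k := by rw [hB2]; field_simp [hp.ne]
  have hkB : k = 2 * A ^ 2 * B ^ 2 := by linear_combination hpB - B ^ 2 * hpA
  rw [hpA, hkB]
  field_simp
  ring
end
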